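/- arXiv:1809.02423 — 4 statements merged into one kernel-verified Lean document; each statement's English description precedes it below -/
import Mathlib

section
/- Let S be a finite GCD-closed set of positive integers in which every element generates a double-chain set. Then the LCM matrix [S] is nonsingular and its inertia is (i_+, i_-, 0), where i_- equals the number of elements x ∈ S that cover exactly one element in (S, |), and i_+ = |S| − i_-. -/
open scoped Classical

/-- The set of elements of `S` covered by `x` in the divisibility order on `S`. -/
def CSdvd (S : Finset ℕ) (x : ℕ) : Set ℕ :=
  {y | y ∈ S ∧ x ∈ S ∧ y ∣ x ∧ y ≠ x ∧
    ∀ z ∈ S, y ∣ z → z ∣ x → z = y ∨ z = x}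

/-- The gcd-closure of `T`: all gcd's of nonempty finite subsets of `T`. -/
def gcdcl (T : Set ℕ) : Set ℕ :=
  {y | ∃ F : Finset ℕ, F.Nonempty ∧ ↑F ⊆ T ∧ y = F.gcd id}

/-- `x` generates a double-chain set in `S` (with respect to divisibility). -/
def genDCdvd (S : Finset ℕ) (x : ℕ) : Prop :=
  ∃ A B : Set ℕ, Disjoint A B ∧ IsChain (· ∣ ·) A ∧ IsChain (· ∣ ·) B ∧
    gcdcl (CSdvd S x) \ CSdvd S x = A ∪ B

namespace Stmt16Aux

open Finset Matrix


/-- The inclusion–exclusion functional. -/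
noncomputable def FF (C : Finset ℕ) : ℝ :=
  ∑ T ∈ C.powerset.filter Finset.Nonempty, (-1 : ℝ) ^ (T.card + 1) * ((T.gcd id : ℕ) : ℝ)⁻¹

/-- Splitting a powerset sum over nonempty subsets according to membership of `y`. -/
lemma split_powerset_sum (C : Finset ℕ) (y : ℕ) (hy : y ∈ C) (f : Finset ℕ → ℝ) :
    ∑ T ∈ C.powerset.filter Finset.Nonempty, f T
      = (∑ T ∈ (C.erase y).powerset.filter Finset.Nonempty, f T) + f {y}
        + ∑ T ∈ (C.erase y).powerset.filter Finset.Nonempty, f (insert y T) := by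
  classical
  have key : ∀ D : Finset ℕ,
      ∑ T ∈ D.powerset.filter Finset.Nonempty, f T
        = ∑ T ∈ D.powerset, (if T.Nonempty then f T else 0) := by
    intro D
    rw [Finset.sum_filter]
  set E := C.erase y with hE
  have hins : C = insert y E := (Finset.insert_erase hy).symm
  rw [key]
  rw [hins, Finset.sum_powerset_insert (Finset.notMem_erase y C)]
  have h2 : ∑ T ∈ E.powerset, (if (insert y T).Nonempty then f (insert y T) else 0)
      = ∑ T ∈ E.powerset, f (insert y T) := by
    apply Finset.sum_congr rfl
    intro T _
    rw [if_pos (Finset.insert_nonempty _ _)]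
  have h3 : ∑ T ∈ E.powerset, f (insert y T)
      = (∑ T ∈ E.powerset.filter Finset.Nonempty, f (insert y T)) + f {y} := by
    rw [← Finset.sum_filter_add_sum_filter_not (E.powerset) Finset.Nonempty
      (fun T => f (insert y T))]
    congr 1
    have : E.powerset.filter (fun T => ¬ T.Nonempty) = {∅} := by
      ext T
      simp [Finset.not_nonempty_iff_eq_empty]
      rintro rfl
      exact Finset.empty_subset _
    rw [this, Finset.sum_singleton]
    rfl
  rw [h2, h3, ← key]
  ring

lemma filter_nonempty_singleton_empty :
    ({∅} : Finset (Finset ℕ)).filter Finset.Nonempty = ∅ := by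
  ext T
  simp [Finset.filter_singleton, Finset.not_nonempty_empty]

lemma FF_empty : FF ∅ = 0 := by
  rw [FF, Finset.powerset_empty, filter_nonempty_singleton_empty, Finset.sum_empty]

lemma FF_singleton (y : ℕ) : FF {y} = ((y : ℕ) : ℝ)⁻¹ := by
  have h := split_powerset_sum {y} y (Finset.mem_singleton_self y)
    (fun T => (-1 : ℝ) ^ (T.card + 1) * ((T.gcd id : ℕ) : ℝ)⁻¹)
  rw [FF, h]
  rw [Finset.erase_singleton, Finset.powerset_empty, filter_nonempty_singleton_empty]
  simp [Finset.gcd_singleton, normalize_eq]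

/-- The alternating sum over nonempty subsets of a nonempty set is 1; else 0. -/
lemma alt_sum (I : Finset ℕ) :
    ∑ T ∈ I.powerset.filter Finset.Nonempty, (-1 : ℝ) ^ (T.card + 1)
      = if I.Nonempty then 1 else 0 := by
  classical
  by_cases hI : I.Nonempty
  · obtain ⟨y, hy⟩ := hI
    have h := split_powerset_sum I y hy (fun T => (-1 : ℝ) ^ (T.card + 1))
    rw [h]
    have : ∑ T ∈ (I.erase y).powerset.filter Finset.Nonempty,
        (-1 : ℝ) ^ ((insert y T).card + 1)
        = ∑ T ∈ (I.erase y).powerset.filter Finset.Nonempty, -((-1 : ℝ) ^ (T.card + 1)) := by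
      apply Finset.sum_congr rfl
      intro T hT
      simp only [Finset.mem_filter, Finset.mem_powerset] at hT
      have hyT : y ∉ T := fun hmem => Finset.notMem_erase y I (hT.1 hmem)
      rw [Finset.card_insert_of_notMem hyT]
      ring
    rw [this, Finset.sum_neg_distrib, if_pos ⟨y, hy⟩]
    simp
  · rw [Finset.not_nonempty_iff_eq_empty] at hI
    subst hI
    rw [Finset.powerset_empty, filter_nonempty_singleton_empty, if_neg]
    · simp
    · exact Finset.not_nonempty_empty

/-- Cancellation: if `h` is invariant under gcd with `y0 ∈ C`, the alternating sum collapses. -/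
lemma cancel (h : ℕ → ℝ) (C : Finset ℕ) (y0 : ℕ) (hy0 : y0 ∈ C)
    (hinv : ∀ n : ℕ, h (Nat.gcd y0 n) = h n) :
    ∑ T ∈ C.powerset.filter Finset.Nonempty, (-1 : ℝ) ^ (T.card + 1) * h (T.gcd id) = h y0 := by
  rw [split_powerset_sum C y0 hy0 (fun T => (-1 : ℝ) ^ (T.card + 1) * h (T.gcd id))]
  have hstep : ∑ T ∈ (C.erase y0).powerset.filter Finset.Nonempty,
      (-1 : ℝ) ^ ((insert y0 T).card + 1) * h ((insert y0 T).gcd id)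
      = ∑ T ∈ (C.erase y0).powerset.filter Finset.Nonempty,
        -((-1 : ℝ) ^ (T.card + 1) * h (T.gcd id)) := by
    apply Finset.sum_congr rfl
    intro T hT
    simp only [Finset.mem_filter, Finset.mem_powerset] at hT
    have hyT : y0 ∉ T := fun hmem => Finset.notMem_erase y0 C (hT.1 hmem)
    rw [Finset.card_insert_of_notMem hyT, Finset.gcd_insert]
    show (-1 : ℝ) ^ (T.card + 1 + 1) * h (Nat.gcd y0 (T.gcd id))
        = -((-1 : ℝ) ^ (T.card + 1) * h (T.gcd id))
    rw [hinv]
    ring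
  rw [hstep, Finset.sum_neg_distrib]
  have : ({y0} : Finset ℕ).gcd id = y0 := by
    rw [Finset.gcd_singleton]; exact normalize_eq _
  rw [this]
  simp

/-- The descent identity. -/
lemma descent (C : Finset ℕ) (ym a : ℕ) (hym : ym ∈ C) (ha : a ∣ ym)
    (hkey : ∀ T ∈ (C.erase ym).powerset, T.Nonempty →
      Nat.gcd ym (T.gcd id) = Nat.gcd (T.gcd id) a)
    (y0 : ℕ) (hy0 : y0 ∈ C.erase ym) (hay0 : a ∣ y0) :
    FF C = FF (C.erase ym) + ((ym : ℕ) : ℝ)⁻¹ - ((a : ℕ) : ℝ)⁻¹ := by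
  rw [FF, split_powerset_sum C ym hym
    (fun T => (-1 : ℝ) ^ (T.card + 1) * ((T.gcd id : ℕ) : ℝ)⁻¹)]
  have h1 : ({ym} : Finset ℕ).gcd id = ym := by
    rw [Finset.gcd_singleton]; exact normalize_eq _
  have hstep : ∑ T ∈ (C.erase ym).powerset.filter Finset.Nonempty,
      (-1 : ℝ) ^ ((insert ym T).card + 1) * (((insert ym T).gcd id : ℕ) : ℝ)⁻¹
      = ∑ T ∈ (C.erase ym).powerset.filter Finset.Nonempty,
        -((-1 : ℝ) ^ (T.card + 1) * ((Nat.gcd (T.gcd id) a : ℕ) : ℝ)⁻¹) := by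
    apply Finset.sum_congr rfl
    intro T hT
    simp only [Finset.mem_filter, Finset.mem_powerset] at hT
    have hyT : ym ∉ T := fun hmem => Finset.notMem_erase ym C (hT.1 hmem)
    rw [Finset.card_insert_of_notMem hyT, Finset.gcd_insert]
    show (-1 : ℝ) ^ (T.card + 1 + 1) * ((Nat.gcd ym (T.gcd id) : ℕ) : ℝ)⁻¹
        = -((-1 : ℝ) ^ (T.card + 1) * ((Nat.gcd (T.gcd id) a : ℕ) : ℝ)⁻¹)
    rw [hkey T (Finset.mem_powerset.mpr hT.1) hT.2]
    ring
  rw [hstep, Finset.sum_neg_distrib, h1]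
  have hcan : ∑ T ∈ (C.erase ym).powerset.filter Finset.Nonempty,
      (-1 : ℝ) ^ (T.card + 1) * ((Nat.gcd (T.gcd id) a : ℕ) : ℝ)⁻¹ = ((a : ℕ) : ℝ)⁻¹ := by
    have hinv : ∀ n : ℕ, ((Nat.gcd (Nat.gcd y0 n) a : ℕ) : ℝ)⁻¹ = ((Nat.gcd n a : ℕ) : ℝ)⁻¹ := by
      intro n
      congr 1
      congr 1
      apply Nat.dvd_antisymm
      · exact Nat.dvd_gcd ((Nat.gcd_dvd_left _ _).trans (Nat.gcd_dvd_right _ _))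
          (Nat.gcd_dvd_right _ _)
      · exact Nat.dvd_gcd
          (Nat.dvd_gcd ((Nat.gcd_dvd_right _ _).trans hay0) (Nat.gcd_dvd_left _ _))
          (Nat.gcd_dvd_right _ _)
    have hc := cancel (fun n => ((Nat.gcd n a : ℕ) : ℝ)⁻¹) (C.erase ym) y0 hy0 hinv
    rw [hc]
    show ((Nat.gcd y0 a : ℕ) : ℝ)⁻¹ = _
    have : Nat.gcd y0 a = a := by
      rw [Nat.gcd_comm]; exact Nat.gcd_eq_left hay0
    rw [this]
  rw [hcan, FF]
  simp only [Finset.card_singleton]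
  ring

/-- helper: gcd of an inserted finset. -/
lemma insert_gcd (y : ℕ) (T : Finset ℕ) :
    (insert y T).gcd id = Nat.gcd y (T.gcd id) := by
  rw [Finset.gcd_insert]; rfl

lemma pair_gcd (y1 y2 : ℕ) : ({y1, y2} : Finset ℕ).gcd id = Nat.gcd y1 y2 := by
  rw [insert_gcd, Finset.gcd_singleton, normalize_eq]; rfl

/-- The finset of gcds of nonempty subsets. -/
noncomputable def meetclF (C : Finset ℕ) : Finset ℕ :=
  (C.powerset.filter Finset.Nonempty).image fun T => T.gcd id

lemma mem_meetclF' {C : Finset ℕ} {z : ℕ} :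
    z ∈ meetclF C ↔ ∃ T : Finset ℕ, T ⊆ C ∧ T.Nonempty ∧ T.gcd id = z := by
  simp only [meetclF, Finset.mem_image, Finset.mem_filter, Finset.mem_powerset]
  constructor
  · rintro ⟨T, ⟨hTC, hTne⟩, rfl⟩; exact ⟨T, hTC, hTne, rfl⟩
  · rintro ⟨T, hTC, hTne, rfl⟩; exact ⟨T, ⟨hTC, hTne⟩, rfl⟩

lemma meetclF_pos {C : Finset ℕ} (hpos : ∀ y ∈ C, 0 < y) {z : ℕ} (hz : z ∈ meetclF C) :
    0 < z := by
  obtain ⟨T, hTC, hTne, rfl⟩ := mem_meetclF'.mp hz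
  rcases Nat.eq_zero_or_pos (T.gcd id) with h | h
  swap
  · exact h
  · exfalso
    obtain ⟨y, hy⟩ := hTne
    have := Finset.gcd_eq_zero_iff.mp h y hy
    simp only [id] at this
    exact absurd (hpos y (hTC hy)) (by omega)

lemma meetclF_mem_gcdcl {C : Finset ℕ} {z : ℕ} (hz : z ∈ meetclF C) :
    z ∈ gcdcl (↑C : Set ℕ) := by
  obtain ⟨T, hTC, hTne, rfl⟩ := mem_meetclF'.mp hz
  exact ⟨T, hTne, by exact_mod_cast Finset.coe_subset.mpr hTC, rfl⟩

lemma meetclF_dvd {C : Finset ℕ} {z : ℕ} (hz : z ∈ meetclF C) :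
    ∃ y ∈ C, z ∣ y := by
  obtain ⟨T, hTC, hTne, rfl⟩ := mem_meetclF'.mp hz
  obtain ⟨y, hy⟩ := hTne
  exact ⟨y, hTC hy, Finset.gcd_dvd hy⟩

/-- arithmetic helper: if `a` properly divides `u` then `u⁻¹ < a⁻¹`. -/
lemma inv_lt_of_proper_dvd {a u : ℕ} (ha : 0 < a) (h : a ∣ u) (hne : a ≠ u) (hu : 0 < u) :
    ((u : ℕ) : ℝ)⁻¹ < ((a : ℕ) : ℝ)⁻¹ := by
  have hau : a < u := lt_of_le_of_ne (Nat.le_of_dvd hu h) hne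
  have h1 : (0 : ℝ) < (a : ℝ) := by exact_mod_cast ha
  have h2 : ((a : ℕ) : ℝ) < ((u : ℕ) : ℝ) := by exact_mod_cast hau
  exact inv_strictAnti₀ h1 h2

/-- arithmetic helper: two distinct proper multiples. -/
lemma inv_add_inv_lt {a u v : ℕ} (ha : 0 < a) (hu : a ∣ u) (hv : a ∣ v)
    (hau : a ≠ u) (hav : a ≠ v) (huv : u ≠ v) (hupos : 0 < u) (hvpos : 0 < v) :
    ((u : ℕ) : ℝ)⁻¹ + ((v : ℕ) : ℝ)⁻¹ < ((a : ℕ) : ℝ)⁻¹ := by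
  -- wlog u < v
  have main : ∀ u v : ℕ, 0 < u → a ∣ u → a ∣ v → a ≠ u → u < v →
      ((u : ℕ) : ℝ)⁻¹ + ((v : ℕ) : ℝ)⁻¹ < ((a : ℕ) : ℝ)⁻¹ := by
    intro u v hupos' hu hv hau huv
    obtain ⟨k, rfl⟩ := hu
    obtain ⟨l, rfl⟩ := hv
    have hk : 2 ≤ k := by
      have hk0 : k ≠ 0 := by rintro rfl; simp at hupos'
      have hk1 : k ≠ 1 := by rintro rfl; simp at hau
      omega
    have hl : 3 ≤ l := by
      have hkl : k < l := lt_of_mul_lt_mul_left huv (Nat.zero_le a)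
      omega
    have hA : (0 : ℝ) < (a : ℝ) := by exact_mod_cast ha
    have e1 : ((a * k : ℕ) : ℝ)⁻¹ ≤ ((a : ℝ) * 2)⁻¹ := by
      apply inv_anti₀ (by linarith)
      push_cast
      have : (2 : ℝ) ≤ (k : ℝ) := by exact_mod_cast hk
      nlinarith
    have e2 : ((a * l : ℕ) : ℝ)⁻¹ ≤ ((a : ℝ) * 3)⁻¹ := by
      apply inv_anti₀ (by linarith)
      push_cast
      have : (3 : ℝ) ≤ (l : ℝ) := by exact_mod_cast hl
      nlinarith
    have e3 : ((a : ℝ) * 2)⁻¹ + ((a : ℝ) * 3)⁻¹ < ((a : ℝ))⁻¹ := by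
      rw [mul_inv, mul_inv]
      have hinv : (0 : ℝ) < (a : ℝ)⁻¹ := inv_pos.mpr hA
      nlinarith
    calc ((a * k : ℕ) : ℝ)⁻¹ + ((a * l : ℕ) : ℝ)⁻¹
        ≤ ((a : ℝ) * 2)⁻¹ + ((a : ℝ) * 3)⁻¹ := by linarith
      _ < ((a : ℝ))⁻¹ := e3
  rcases lt_trichotomy u v with h | h | h
  · exact main u v hupos hu hv hau h
  · exact absurd h huv
  · have := main v u hvpos hv hu hav h
    linarith


/-- Main negativity lemma: `FF C < 0` for an antichain with ≥2 elements whose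
gcd-closure difference is covered by two chains. -/
lemma FF_neg (A B : Set ℕ) (hA : IsChain (· ∣ ·) A) (hB : IsChain (· ∣ ·) B) :
    ∀ n : ℕ, ∀ C : Finset ℕ, C.card ≤ n → (∀ y ∈ C, 0 < y) →
    (∀ y ∈ C, ∀ y' ∈ C, y ∣ y' → y = y') →
    (∀ z : ℕ, z ∈ gcdcl (↑C : Set ℕ) → z ∉ (↑C : Set ℕ) → z ∈ A ∪ B) →
    2 ≤ C.card → FF C < 0 := by
  intro n
  induction n with
  | zero => intro C hc _ _ _ h2; omega
  | succ n IH =>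
    intro C hcard hpos ham hcov h2
    -- two distinct elements of C
    obtain ⟨y1', hy1', y2', hy2', hne'⟩ := Finset.one_lt_card.mp (show 1 < C.card by omega)
    -- the set of non-cover elements of the meet closure is nonempty
    have hDne : ((meetclF C) \ C).Nonempty := by
      refine ⟨Nat.gcd y1' y2', Finset.mem_sdiff.mpr ⟨?_, ?_⟩⟩
      · exact mem_meetclF'.mpr ⟨{y1', y2'}, by
          intro t ht
          rcases Finset.mem_insert.mp ht with rfl | ht
          · exact hy1'
          · rw [Finset.mem_singleton.mp ht]; exact hy2',
          ⟨y1', Finset.mem_insert_self _ _⟩, pair_gcd y1' y2'⟩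
      · intro hgC
        have e1 : Nat.gcd y1' y2' = y1' :=
          ham _ hgC _ hy1' (Nat.gcd_dvd_left _ _)
        have e2 : y1' = y2' := by
          apply ham _ hy1' _ hy2'
          rw [← e1]
          exact Nat.gcd_dvd_right _ _
        exact hne' e2
    obtain ⟨a, haD, hamax⟩ := Finset.exists_max_image ((meetclF C) \ C) id hDne
    have ha_mem : a ∈ meetclF C := (Finset.mem_sdiff.mp haD).1
    have ha_notC : a ∉ C := (Finset.mem_sdiff.mp haD).2
    have hapos : 0 < a := meetclF_pos hpos ha_mem
    -- divisibility-maximality of a among non-cover closure elements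
    have hamaxdvd : ∀ w, w ∈ meetclF C → w ∉ C → a ∣ w → w = a := by
      intro w hw hwC hdvd
      have hle : w ≤ a := hamax w (Finset.mem_sdiff.mpr ⟨hw, hwC⟩)
      exact le_antisymm hle (Nat.le_of_dvd (meetclF_pos hpos hw) hdvd)
    -- the support of a
    set Tset := C.filter (fun y => a ∣ y) with hTset
    have hTsub : Tset ⊆ C := Finset.filter_subset _ _
    have hT2 : 2 ≤ Tset.card := by
      obtain ⟨T0, hT0C, hT0ne, hT0g⟩ := mem_meetclF'.mp ha_mem
      have hT0sub : T0 ⊆ Tset := by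
        intro y hy
        refine Finset.mem_filter.mpr ⟨hT0C hy, ?_⟩
        rw [← hT0g]
        exact Finset.gcd_dvd hy
      have : 2 ≤ T0.card := by
        rcases Nat.lt_or_ge T0.card 2 with h | h
        · exfalso
          interval_cases hh : T0.card
          · exact Finset.card_ne_zero_of_mem hT0ne.choose_spec hh
          · obtain ⟨y, hy⟩ := Finset.card_eq_one.mp hh
            apply ha_notC
            have : T0.gcd id = y := by
              rw [hy, Finset.gcd_singleton, normalize_eq]; rfl
            rw [← hT0g, this]
            exact hT0C (hy ▸ Finset.mem_singleton_self y)
        · exact h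
      exact le_trans this (Finset.card_le_card hT0sub)
    -- pairwise gcds within the support all equal a
    have hpair : ∀ y1 ∈ Tset, ∀ y2 ∈ Tset, y1 ≠ y2 → Nat.gcd y1 y2 = a := by
      intro y1 hy1 y2 hy2 hne
      obtain ⟨hy1C, hay1⟩ := Finset.mem_filter.mp hy1
      obtain ⟨hy2C, hay2⟩ := Finset.mem_filter.mp hy2
      have hdmem : Nat.gcd y1 y2 ∈ meetclF C := mem_meetclF'.mpr ⟨{y1, y2}, by
          intro t ht
          rcases Finset.mem_insert.mp ht with rfl | ht
          · exact hy1C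
          · rw [Finset.mem_singleton.mp ht]; exact hy2C,
          ⟨y1, Finset.mem_insert_self _ _⟩, pair_gcd y1 y2⟩
      have hdC : Nat.gcd y1 y2 ∉ C := by
        intro hdC
        have e1 : Nat.gcd y1 y2 = y1 := ham _ hdC _ hy1C (Nat.gcd_dvd_left _ _)
        apply hne
        apply ham _ hy1C _ hy2C
        rw [← e1]
        exact Nat.gcd_dvd_right _ _
      exact hamaxdvd _ hdmem hdC (Nat.dvd_gcd hay1 hay2)
    -- specialness
    have huniq : ∀ y1 ∈ Tset, ∀ y2 ∈ Tset,
        (∃ w ∈ meetclF C, w ∣ y1 ∧ w ≠ y1 ∧ ¬ w ∣ a) →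
        (∃ w ∈ meetclF C, w ∣ y2 ∧ w ≠ y2 ∧ ¬ w ∣ a) → y1 = y2 := by
      intro y1 hy1 y2 hy2 ⟨w1, hw1m, hw1d, hw1ne, hw1a⟩ ⟨w2, hw2m, hw2d, hw2ne, hw2a⟩
      by_contra hne
      have hwC : ∀ w y, w ∈ meetclF C → y ∈ Tset → w ∣ y → w ≠ y → w ∉ C := by
        intro w y hwm hyT hwd hwne hwC
        exact hwne (ham _ hwC _ (hTsub hyT) hwd)
      have hw1C : w1 ∉ C := hwC w1 y1 hw1m hy1 hw1d hw1ne
      have hw2C : w2 ∉ C := hwC w2 y2 hw2m hy2 hw2d hw2ne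
      have hw1AB : w1 ∈ A ∪ B := hcov w1 (meetclF_mem_gcdcl hw1m) (by simpa using hw1C)
      have hw2AB : w2 ∈ A ∪ B := hcov w2 (meetclF_mem_gcdcl hw2m) (by simpa using hw2C)
      have haAB : a ∈ A ∪ B := hcov a (meetclF_mem_gcdcl ha_mem) (by simpa using ha_notC)
      -- incomparability of w_i with a
      have hinc : ∀ w, w ∈ meetclF C → w ∉ C → ¬ w ∣ a → ¬ a ∣ w := by
        intro w hwm hwC hwa hdvd
        exact hwa ((hamaxdvd w hwm hwC hdvd) ▸ dvd_refl a)
      have hw1inc : ¬ a ∣ w1 := hinc w1 hw1m hw1C hw1a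
      have hw2inc : ¬ a ∣ w2 := hinc w2 hw2m hw2C hw2a
      -- w1 and w2 both divide a : contradiction helper
      have hgcd12 : Nat.gcd y1 y2 = a := hpair y1 hy1 y2 hy2 hne
      have hfinal : ∀ w w', w ∣ y1 → w' ∣ y2 → (w = w' ∨ w ∣ w' ∨ w' ∣ w) →
          ¬ w ∣ a → ¬ w' ∣ a → False := by
        intro w w' hd1 hd2 hcases hwa hw'a
        rcases hcases with rfl | hdd | hdd
        · exact hwa (hgcd12 ▸ Nat.dvd_gcd hd1 hd2)
        · exact hwa (hgcd12 ▸ Nat.dvd_gcd hd1 (hdd.trans hd2))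
        · exact hw'a (hgcd12 ▸ Nat.dvd_gcd (hdd.trans hd1) hd2)
      -- same-chain exclusion with a
      have hnotwith : ∀ (Q : Set ℕ), IsChain (· ∣ ·) Q → a ∈ Q →
          ∀ w, ¬ w ∣ a → ¬ a ∣ w → w ∉ Q := by
        intro Q hQ haQ w hwa haw hwQ
        have hne' : w ≠ a := fun h => hwa (h ▸ dvd_refl w)
        rcases hQ hwQ haQ hne' with h | h
        · exact hwa h
        · exact haw h
      -- both w1 w2 are in the chain not containing a; chains are comparable
      have hcomp : w1 = w2 ∨ w1 ∣ w2 ∨ w2 ∣ w1 := by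
        rcases haAB with haA | haB
        · have hw1B : w1 ∈ B := by
            rcases hw1AB with h | h
            · exact absurd h (hnotwith A hA haA w1 hw1a hw1inc)
            · exact h
          have hw2B : w2 ∈ B := by
            rcases hw2AB with h | h
            · exact absurd h (hnotwith A hA haA w2 hw2a hw2inc)
            · exact h
          by_cases hww : w1 = w2
          · exact Or.inl hww
          · exact Or.inr (hB hw1B hw2B hww)
        · have hw1A : w1 ∈ A := by
            rcases hw1AB with h | h
            · exact h
            · exact absurd h (hnotwith B hB haB w1 hw1a hw1inc)
          have hw2A : w2 ∈ A := by
            rcases hw2AB with h | h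
            · exact h
            · exact absurd h (hnotwith B hB haB w2 hw2a hw2inc)
          by_cases hww : w1 = w2
          · exact Or.inl hww
          · exact Or.inr (hA hw1A hw2A hww)
      exact hfinal w1 w2 hw1d hw2d hcomp hw1a hw2a
    -- choose a nonspecial element ym of Tset, and another element y0
    obtain ⟨z1, hz1, z2, hz2, hzne⟩ := Finset.one_lt_card.mp (by omega : 1 < Tset.card)
    have hym : ∃ ym ∈ Tset, ∃ y0 ∈ Tset, y0 ≠ ym ∧
        ¬ (∃ w ∈ meetclF C, w ∣ ym ∧ w ≠ ym ∧ ¬ w ∣ a) := by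
      by_cases hs1 : ∃ w ∈ meetclF C, w ∣ z1 ∧ w ≠ z1 ∧ ¬ w ∣ a
      · refine ⟨z2, hz2, z1, hz1, hzne, ?_⟩
        intro hs2
        exact hzne (huniq z1 hz1 z2 hz2 hs1 hs2)
      · exact ⟨z1, hz1, z2, hz2, Ne.symm hzne, hs1⟩
    obtain ⟨ym, hymT, y0, hy0T, hy0ne, hnons⟩ := hym
    push_neg at hnons
    have hymC : ym ∈ C := hTsub hymT
    have haym : a ∣ ym := (Finset.mem_filter.mp hymT).2
    have hay0 : a ∣ y0 := (Finset.mem_filter.mp hy0T).2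
    have hy0C : y0 ∈ C := hTsub hy0T
    have haneym : a ≠ ym := fun h => ha_notC (h ▸ hymC)
    have haney0 : a ≠ y0 := fun h => ha_notC (h ▸ hy0C)
    -- the key gcd computation for the descent
    have hkey : ∀ T ∈ (C.erase ym).powerset, T.Nonempty →
        Nat.gcd ym (T.gcd id) = Nat.gcd (T.gcd id) a := by
      intro T hT hTne
      have hTsubE : T ⊆ C.erase ym := Finset.mem_powerset.mp hT
      have hTC : T ⊆ C := hTsubE.trans (Finset.erase_subset _ _)
      set d := Nat.gcd ym (T.gcd id) with hd
      have hdm : d ∈ meetclF C := by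
        refine mem_meetclF'.mpr ⟨insert ym T, ?_, ⟨ym, Finset.mem_insert_self _ _⟩, ?_⟩
        · intro t ht
          rcases Finset.mem_insert.mp ht with rfl | ht
          · exact hymC
          · exact hTC ht
        · exact insert_gcd ym T
      obtain ⟨y', hy'⟩ := hTne
      have hdy' : d ∣ y' := (Nat.gcd_dvd_right ym (T.gcd id)).trans (Finset.gcd_dvd hy')
      have hdne : d ≠ ym := by
        intro h
        have hymy' : ym ∣ y' := h ▸ hdy'
        have he : ym = y' := ham _ hymC _ (hTC hy') hymy'
        exact (Finset.mem_erase.mp (hTsubE hy')).1 he.symm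
      have hda : d ∣ a := hnons d hdm (Nat.gcd_dvd_left _ _) hdne
      apply Nat.dvd_antisymm
      · exact Nat.dvd_gcd (Nat.gcd_dvd_right _ _) hda
      · exact Nat.dvd_gcd ((Nat.gcd_dvd_right _ _).trans haym) (Nat.gcd_dvd_left _ _)
    -- descent identity
    have hy0E : y0 ∈ C.erase ym := Finset.mem_erase.mpr ⟨hy0ne, hy0C⟩
    have hdes := descent C ym a hymC haym hkey y0 hy0E hay0
    have hstep : ((ym : ℕ) : ℝ)⁻¹ - ((a : ℕ) : ℝ)⁻¹ < 0 := by
      have := inv_lt_of_proper_dvd hapos haym haneym (hpos ym hymC)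
      linarith
    -- two cases on the size of the remaining antichain
    rcases Nat.lt_or_ge (C.erase ym).card 2 with hsmall | hbig
    · -- C.erase ym = {y0}
      have hcarde : (C.erase ym).card = 1 := by
        have : 0 < (C.erase ym).card := Finset.card_pos.mpr ⟨y0, hy0E⟩
        omega
      obtain ⟨b, hb⟩ := Finset.card_eq_one.mp hcarde
      have hy0b : y0 = b := by
        have := hb ▸ hy0E
        exact Finset.mem_singleton.mp this
      rw [hdes, hb, ← hy0b, FF_singleton]
      have := inv_add_inv_lt hapos hay0 haym haney0 haneym hy0ne
        (hpos y0 hy0C) (hpos ym hymC)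
      linarith
    · -- inductive case
      have hcard' : (C.erase ym).card ≤ n := by
        rw [Finset.card_erase_of_mem hymC] at *
        omega
      have hrec := IH (C.erase ym) hcard'
        (fun y hy => hpos y (Finset.erase_subset _ _ hy))
        (fun y hy y' hy' hd => ham y (Finset.erase_subset _ _ hy) y'
          (Finset.erase_subset _ _ hy') hd)
        ?_ hbig
      · rw [hdes]
        linarith
      · -- covering hypothesis for the erased set
        intro z hz hzC
        obtain ⟨F, hFne, hFsub, hFg⟩ := hz
        have hFsub' : (↑F : Set ℕ) ⊆ (↑C : Set ℕ) := by
          intro t ht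
          exact Finset.mem_coe.mpr (Finset.erase_subset _ _ (Finset.mem_coe.mp (hFsub ht)))
        have hzCnot : z ∉ (↑C : Set ℕ) := by
          intro hzC'
          apply hzC
          obtain ⟨y', hy'⟩ := hFne
          have hzy' : z ∣ y' := hFg ▸ Finset.gcd_dvd hy'
          have : z = y' := ham _ (Finset.mem_coe.mp hzC') _
            (Finset.mem_coe.mp (hFsub' hy')) hzy'
          rw [this]
          exact hFsub hy'
        exact hcov z ⟨F, hFne, hFsub', hFg⟩ hzCnot

/-- The coefficients β, defined by recursion on divisibility. -/
noncomputable def beta (S : Finset ℕ) (z : ℕ) : ℝ :=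
  if hz : z = 0 then 0
  else ((z : ℕ) : ℝ)⁻¹ -
    ∑ w ∈ (S.filter fun w => w ∣ z ∧ w ≠ z).attach, beta S w.1
termination_by z
decreasing_by
  have hmem := w.2
  simp only [Finset.mem_filter] at hmem
  exact lt_of_le_of_ne (Nat.le_of_dvd (Nat.pos_of_ne_zero hz) hmem.2.1) hmem.2.2

lemma beta_def (S : Finset ℕ) (z : ℕ) (hz : z ≠ 0) :
    beta S z = ((z : ℕ) : ℝ)⁻¹ - ∑ w ∈ S.filter (fun w => w ∣ z ∧ w ≠ z), beta S w := by
  rw [beta, dif_neg hz]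
  congr 1
  exact Finset.sum_attach _ _

/-- The defining identity: for z ∈ S, the β's of the S-divisors of z sum to 1/z. -/
lemma sum_beta_dvd (S : Finset ℕ) (h0 : 0 ∉ S) {z : ℕ} (hz : z ∈ S) :
    ∑ w ∈ S.filter (· ∣ z), beta S w = ((z : ℕ) : ℝ)⁻¹ := by
  have hz0 : z ≠ 0 := fun h => h0 (h ▸ hz)
  have hsplit : S.filter (· ∣ z) = insert z (S.filter fun w => w ∣ z ∧ w ≠ z) := by
    ext w
    simp only [Finset.mem_filter, Finset.mem_insert]
    constructor
    · rintro ⟨hwS, hwz⟩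
      by_cases h : w = z
      · exact Or.inl h
      · exact Or.inr ⟨hwS, hwz, h⟩
    · rintro (rfl | ⟨hwS, hwz, hne⟩)
      · exact ⟨hz, dvd_refl _⟩
      · exact ⟨hwS, hwz⟩
  rw [hsplit, Finset.sum_insert (by simp), beta_def S z hz0]
  ring

/-- gcd-closedness extends to finsets. -/
lemma gcd_mem (S : Finset ℕ) (hg : ∀ a ∈ S, ∀ b ∈ S, Nat.gcd a b ∈ S) :
    ∀ T : Finset ℕ, T.Nonempty → T ⊆ S → T.gcd id ∈ S := by
  intro T
  induction T using Finset.induction_on with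
  | empty => rintro ⟨y, hy⟩; cases hy
  | @insert a T ha IH =>
    intro _ hsub
    have haS : a ∈ S := hsub (Finset.mem_insert_self _ _)
    by_cases hT : T.Nonempty
    · have hTS : T ⊆ S := fun t ht => hsub (Finset.mem_insert_of_mem ht)
      have : (insert a T).gcd id = Nat.gcd a (T.gcd id) := by
        rw [Finset.gcd_insert]; rfl
      rw [this]
      exact hg a haS _ (IH hT hTS)
    · rw [Finset.not_nonempty_iff_eq_empty] at hT
      subst hT
      have : (insert a ∅ : Finset ℕ).gcd id = a := by
        rw [Finset.gcd_insert, Finset.gcd_empty]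
        simp [normalize_eq]
      rw [this]
      exact haS

/-- The cover set as a finset. -/
noncomputable def CF (S : Finset ℕ) (x : ℕ) : Finset ℕ :=
  S.filter fun y => y ∣ x ∧ y ≠ x ∧ ∀ z ∈ S, y ∣ z → z ∣ x → z = y ∨ z = x

lemma coe_CF (S : Finset ℕ) (x : ℕ) (hx : x ∈ S) :
    (↑(CF S x) : Set ℕ) = CSdvd S x := by
  ext y
  simp only [CF, Finset.coe_filter, Set.mem_setOf_eq, CSdvd, Finset.mem_coe]
  constructor
  · rintro ⟨h1, h2, h3, h4⟩; exact ⟨h1, hx, h2, h3, h4⟩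
  · rintro ⟨h1, _, h2, h3, h4⟩; exact ⟨h1, h2, h3, h4⟩

lemma CF_subset (S : Finset ℕ) (x : ℕ) : CF S x ⊆ S := Finset.filter_subset _ _

/-- every proper S-divisor of x divides some cover of x. -/
lemma exists_cover (S : Finset ℕ) (h0 : 0 ∉ S) {x w : ℕ} (hx : x ∈ S) (hw : w ∈ S)
    (hdvd : w ∣ x) (hne : w ≠ x) : ∃ y ∈ CF S x, w ∣ y := by
  set Z := S.filter fun z => w ∣ z ∧ z ∣ x ∧ z ≠ x with hZ
  have hwZ : w ∈ Z := Finset.mem_filter.mpr ⟨hw, dvd_refl w, hdvd, hne⟩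
  obtain ⟨y, hyZ, hymax⟩ := Finset.exists_max_image Z id ⟨w, hwZ⟩
  obtain ⟨hyS, hwy, hyx, hynex⟩ := Finset.mem_filter.mp hyZ
  refine ⟨y, Finset.mem_filter.mpr ⟨hyS, hyx, hynex, ?_⟩, hwy⟩
  intro z hzS hyz hzx
  by_contra hcon
  push_neg at hcon
  obtain ⟨hzy, hzx'⟩ := hcon
  have hzZ : z ∈ Z := Finset.mem_filter.mpr ⟨hzS, hwy.trans hyz, hzx, hzx'⟩
  have hle : z ≤ y := hymax z hzZ
  have hzpos : 0 < z := Nat.pos_of_ne_zero (fun h => h0 (h ▸ hzS))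
  have : y < z := lt_of_le_of_ne (Nat.le_of_dvd hzpos hyz) (fun h => hzy h.symm)
  omega

/-- The inclusion–exclusion identity. -/
lemma beta_eq (S : Finset ℕ) (h0 : 0 ∉ S) (hg : ∀ a ∈ S, ∀ b ∈ S, Nat.gcd a b ∈ S)
    {x : ℕ} (hx : x ∈ S) :
    beta S x = ((x : ℕ) : ℝ)⁻¹ - FF (CF S x) := by
  have hx0 : x ≠ 0 := fun h => h0 (h ▸ hx)
  rw [beta_def S x hx0]
  congr 1
  -- ∑ over proper divisors = FF (CF S x)
  rw [FF]
  have hFF : ∑ T ∈ (CF S x).powerset.filter Finset.Nonempty,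
      (-1 : ℝ) ^ (T.card + 1) * ((T.gcd id : ℕ) : ℝ)⁻¹
      = ∑ T ∈ (CF S x).powerset.filter Finset.Nonempty,
        ∑ w ∈ S, (-1 : ℝ) ^ (T.card + 1) * (if w ∣ T.gcd id then beta S w else 0) := by
    apply Finset.sum_congr rfl
    intro T hT
    simp only [Finset.mem_filter, Finset.mem_powerset] at hT
    have hgcdS : T.gcd id ∈ S := gcd_mem S hg T hT.2 (hT.1.trans (CF_subset S x))
    rw [← Finset.mul_sum]
    congr 1
    rw [← sum_beta_dvd S h0 hgcdS, Finset.sum_filter]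
  rw [hFF, Finset.sum_comm]
  -- now for each w, evaluate the inner alternating sum
  have hinner : ∀ w ∈ S,
      ∑ T ∈ (CF S x).powerset.filter Finset.Nonempty,
        (-1 : ℝ) ^ (T.card + 1) * (if w ∣ T.gcd id then beta S w else 0)
      = (if ((CF S x).filter (w ∣ ·)).Nonempty then 1 else 0) * beta S w := by
    intro w _
    set I := (CF S x).filter (w ∣ ·) with hI
    have hiff : ∀ T ∈ (CF S x).powerset.filter Finset.Nonempty,
        (w ∣ T.gcd id ↔ T ⊆ I) := by
      intro T hT
      simp only [Finset.mem_filter, Finset.mem_powerset] at hT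
      rw [Finset.dvd_gcd_iff]
      constructor
      · intro h t ht
        exact Finset.mem_filter.mpr ⟨hT.1 ht, h t ht⟩
      · intro h t ht
        exact (Finset.mem_filter.mp (h ht)).2
    have hsplit2 : ∑ T ∈ (CF S x).powerset.filter Finset.Nonempty,
        (-1 : ℝ) ^ (T.card + 1) * (if w ∣ T.gcd id then beta S w else 0)
        = ∑ T ∈ I.powerset.filter Finset.Nonempty, (-1 : ℝ) ^ (T.card + 1) * beta S w := by
      rw [← Finset.sum_filter_add_sum_filter_not ((CF S x).powerset.filter Finset.Nonempty)
        (fun T => w ∣ T.gcd id)]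
      have hz : ∑ T ∈ ((CF S x).powerset.filter Finset.Nonempty).filter
          (fun T => ¬ w ∣ T.gcd id), (-1 : ℝ) ^ (T.card + 1) *
            (if w ∣ T.gcd id then beta S w else 0) = 0 := by
        apply Finset.sum_eq_zero
        intro T hT
        rw [if_neg (Finset.mem_filter.mp hT).2, mul_zero]
      rw [hz, add_zero]
      have hset : ((CF S x).powerset.filter Finset.Nonempty).filter
          (fun T => w ∣ T.gcd id) = I.powerset.filter Finset.Nonempty := by
        ext T
        simp only [Finset.mem_filter, Finset.mem_powerset]
        constructor
        · rintro ⟨⟨hTC, hTne⟩, hdvd⟩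
          refine ⟨(hiff T ?_).mp hdvd, hTne⟩
          exact Finset.mem_filter.mpr ⟨Finset.mem_powerset.mpr hTC, hTne⟩
        · rintro ⟨hTI, hTne⟩
          have hTC : T ⊆ CF S x := hTI.trans (Finset.filter_subset _ _)
          refine ⟨⟨hTC, hTne⟩, (hiff T ?_).mpr hTI⟩
          exact Finset.mem_filter.mpr ⟨Finset.mem_powerset.mpr hTC, hTne⟩
      rw [hset]
      apply Finset.sum_congr rfl
      intro T hT
      simp only [Finset.mem_filter, Finset.mem_powerset] at hT
      rw [if_pos ((hiff T (Finset.mem_filter.mpr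
        ⟨Finset.mem_powerset.mpr (hT.1.trans (Finset.filter_subset _ _)), hT.2⟩)).mpr hT.1)]
    rw [hsplit2, ← Finset.sum_mul, alt_sum]
  rw [Finset.sum_congr rfl hinner]
  -- finally, the covered elements are exactly the proper divisors
  have : ∀ w ∈ S, (if ((CF S x).filter (w ∣ ·)).Nonempty then (1:ℝ) else 0) * beta S w
      = if (w ∣ x ∧ w ≠ x) then beta S w else 0 := by
    intro w hwS
    by_cases hc : ((CF S x).filter (w ∣ ·)).Nonempty
    · rw [if_pos hc, one_mul, if_pos]
      obtain ⟨y, hy⟩ := hc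
      obtain ⟨hyC, hwy⟩ := Finset.mem_filter.mp hy
      obtain ⟨hyS, hyx, hynex, _⟩ := Finset.mem_filter.mp hyC
      constructor
      · exact hwy.trans hyx
      · intro h
        subst h
        exact hynex (Nat.dvd_antisymm hyx hwy)
    · have hnc : ¬ (w ∣ x ∧ w ≠ x) := by
        rintro ⟨hdvd, hne⟩
        obtain ⟨y, hyC, hwy⟩ := exists_cover S h0 hx hwS hdvd hne
        exact hc ⟨y, Finset.mem_filter.mpr ⟨hyC, hwy⟩⟩
      rw [if_neg hc, zero_mul, if_neg hnc]
  rw [Finset.sum_congr rfl this, ← Finset.sum_filter]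


lemma CF_antichain (S : Finset ℕ) (x : ℕ) :
    ∀ y ∈ CF S x, ∀ y' ∈ CF S x, y ∣ y' → y = y' := by
  intro y hy y' hy' hd
  obtain ⟨hyS, hyx, hyne, hycov⟩ := Finset.mem_filter.mp hy
  obtain ⟨hy'S, hy'x, hy'ne, _⟩ := Finset.mem_filter.mp hy'
  rcases hycov y' hy'S hd hy'x with h | h
  · exact h.symm
  · exact absurd h hy'ne

lemma beta_sign (S : Finset ℕ) (h0 : 0 ∉ S) (hg : ∀ a ∈ S, ∀ b ∈ S, Nat.gcd a b ∈ S)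
    (hdc : ∀ x ∈ S, genDCdvd S x) {x : ℕ} (hx : x ∈ S) :
    (beta S x < 0 ∧ (CSdvd S x).ncard = 1) ∨ (0 < beta S x ∧ (CSdvd S x).ncard ≠ 1) := by
  have hx0 : x ≠ 0 := fun h => h0 (h ▸ hx)
  have hxpos : 0 < x := Nat.pos_of_ne_zero hx0
  have hxinv : (0:ℝ) < ((x:ℕ):ℝ)⁻¹ := by
    apply inv_pos.mpr
    exact_mod_cast hxpos
  have hncard : (CSdvd S x).ncard = (CF S x).card := by
    rw [← coe_CF S x hx, Set.ncard_coe_finset]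
  have hbe := beta_eq S h0 hg hx
  rcases Nat.lt_or_ge (CF S x).card 2 with hlt | hge
  · rcases (show (CF S x).card = 0 ∨ (CF S x).card = 1 by omega) with h | h
    · right
      have hCF : CF S x = ∅ := Finset.card_eq_zero.mp h
      rw [hbe, hCF, FF_empty]
      exact ⟨by linarith, by rw [hncard, h]; omega⟩
    · left
      obtain ⟨y, hy⟩ := Finset.card_eq_one.mp h
      have hymem : y ∈ CF S x := hy ▸ Finset.mem_singleton_self y
      obtain ⟨hyS, hyx, hyne, _⟩ := Finset.mem_filter.mp hymem
      have hypos : 0 < y := Nat.pos_of_ne_zero (fun hh => h0 (hh ▸ hyS))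
      rw [hbe, hy, FF_singleton]
      refine ⟨?_, by rw [hncard, h]⟩
      have := inv_lt_of_proper_dvd hypos hyx hyne hxpos
      linarith
  · right
    obtain ⟨A, B, hdisj, hA, hB, heq⟩ := hdc x hx
    have hFF : FF (CF S x) < 0 := by
      apply FF_neg A B hA hB (CF S x).card (CF S x) le_rfl
      · intro y hy
        exact Nat.pos_of_ne_zero (fun hh => h0 (hh ▸ (CF_subset S x hy)))
      · exact CF_antichain S x
      · intro z hz hznot
        rw [coe_CF S x hx] at hz hznot
        have hmem : z ∈ gcdcl (CSdvd S x) \ CSdvd S x := ⟨hz, hznot⟩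
        rw [heq] at hmem
        exact hmem
      · exact hge
    refine ⟨by rw [hbe]; linarith, by rw [hncard]; omega⟩

lemma card_filter_subtype (S : Finset ℕ) (p : ℕ → Prop) :
    (Finset.univ.filter fun i : {x // x ∈ S} => p i.1).card = (S.filter p).card := by
  apply Finset.card_bij (fun (i : {x // x ∈ S}) _ => i.1)
  · intro a ha
    exact Finset.mem_filter.mpr ⟨a.2, (Finset.mem_filter.mp ha).2⟩
  · intro a _ b _ h
    exact Subtype.ext h
  · intro b hb
    obtain ⟨hbS, hbp⟩ := Finset.mem_filter.mp hb
    exact ⟨⟨b, hbS⟩, Finset.mem_filter.mpr ⟨Finset.mem_univ _, hbp⟩, rfl⟩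

/-- Core Sylvester-type inequality: if `diagonal μ = Q * diagonal δ * Qᵀ` then the
number of negative entries of μ is at most that of δ. -/
lemma negcount_le {n : Type*} [Fintype n] [DecidableEq n] (Q : Matrix n n ℝ) (μ δ : n → ℝ)
    (h : Matrix.diagonal μ = Q * Matrix.diagonal δ * Qᵀ) :
    (Finset.univ.filter fun i => μ i < 0).card ≤ (Finset.univ.filter fun i => δ i < 0).card := by
  -- quadratic form computation
  have quad : ∀ u : n → ℝ,
      ∑ i, μ i * (u i * u i) = ∑ k, δ k * ((Qᵀ *ᵥ u) k * (Qᵀ *ᵥ u) k) := by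
    intro u
    have lhs : u ⬝ᵥ (Matrix.diagonal μ *ᵥ u) = ∑ i, μ i * (u i * u i) := by
      simp only [dotProduct, Matrix.mulVec_diagonal]
      apply Finset.sum_congr rfl
      intro i _
      ring
    have rhs : u ⬝ᵥ ((Q * Matrix.diagonal δ * Qᵀ) *ᵥ u)
        = ∑ k, δ k * ((Qᵀ *ᵥ u) k * (Qᵀ *ᵥ u) k) := by
      rw [← Matrix.mulVec_mulVec, ← Matrix.mulVec_mulVec]
      rw [Matrix.dotProduct_mulVec u Q]
      have : u ᵥ* Q = Qᵀ *ᵥ u := by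
        rw [← Matrix.transpose_transpose Q]
        rw [Matrix.vecMul_transpose]
        rw [Matrix.transpose_transpose]
      rw [this]
      simp only [dotProduct, Matrix.mulVec_diagonal]
      apply Finset.sum_congr rfl
      intro k _
      ring
    rw [← lhs, ← rhs, h]
  -- the extension linear map
  let E : ({i // μ i < 0} → ℝ) →ₗ[ℝ] (n → ℝ) :=
    { toFun := fun v i => if h : μ i < 0 then v ⟨i, h⟩ else 0
      map_add' := by
        intro v w
        funext i
        by_cases h : μ i < 0 <;> simp [h]
      map_smul' := by
        intro c v
        funext i
        by_cases h : μ i < 0 <;> simp [h] }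
  let φ : ({i // μ i < 0} → ℝ) →ₗ[ℝ] ({k // δ k < 0} → ℝ) :=
    (LinearMap.funLeft ℝ ℝ Subtype.val) ∘ₗ (Matrix.mulVecLin Qᵀ) ∘ₗ E
  have hinj : Function.Injective φ := by
    rw [← LinearMap.ker_eq_bot]
    rw [Submodule.eq_bot_iff]
    intro v hv
    have hv' : ∀ k : {k // δ k < 0}, (Qᵀ *ᵥ (E v)) k.1 = 0 := by
      intro k
      exact congrFun (LinearMap.mem_ker.mp hv) k
    have hq := quad (E v)
    have hle : ∑ i, μ i * ((E v) i * (E v) i) ≤ 0 := by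
      apply Finset.sum_nonpos
      intro i _
      by_cases h : μ i < 0
      · have : (E v) i = v ⟨i, h⟩ := by simp [E, h]
        rw [this]
        apply mul_nonpos_of_nonpos_of_nonneg (le_of_lt h) (mul_self_nonneg _)
      · have : (E v) i = 0 := by simp [E, h]
        rw [this]
        simp
    have hge : 0 ≤ ∑ k, δ k * ((Qᵀ *ᵥ (E v)) k * (Qᵀ *ᵥ (E v)) k) := by
      apply Finset.sum_nonneg
      intro k _
      by_cases h : δ k < 0
      · rw [hv' ⟨k, h⟩]
        simp
      · push_neg at h
        exact mul_nonneg h (mul_self_nonneg _)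
    have hzero : ∑ i, μ i * ((E v) i * (E v) i) = 0 := le_antisymm hle (hq ▸ hge)
    have hall := (Finset.sum_eq_zero_iff_of_nonpos ?_).mp hzero
    swap
    · intro i _
      by_cases h : μ i < 0
      · have : (E v) i = v ⟨i, h⟩ := by simp [E, h]
        rw [this]
        exact mul_nonpos_of_nonpos_of_nonneg (le_of_lt h) (mul_self_nonneg _)
      · have : (E v) i = 0 := by simp [E, h]
        rw [this]; simp
    funext i
    obtain ⟨i, hi⟩ := i
    have := hall i (Finset.mem_univ i)
    have hEv : (E v) i = v ⟨i, hi⟩ := by simp [E, hi]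
    rw [hEv] at this
    have hvi : v ⟨i, hi⟩ * v ⟨i, hi⟩ = 0 := by
      by_contra hne
      exact absurd this (by
        have : μ i ≠ 0 := ne_of_lt hi
        exact mul_ne_zero this hne)
    have := mul_self_eq_zero.mp hvi
    simpa using this
  have hrank := LinearMap.finrank_le_finrank_of_injective hinj
  rw [Module.finrank_pi ℝ, Module.finrank_pi ℝ] at hrank
  rwa [Fintype.card_subtype, Fintype.card_subtype] at hrank

end Stmt16Aux

open Matrix Stmt16Aux in
theorem stmt16 (S : Finset ℕ) (h0 : 0 ∉ S)
    (hg : ∀ a ∈ S, ∀ b ∈ S, Nat.gcd a b ∈ S)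
    (hdc : ∀ x ∈ S, genDCdvd S x)
    (M : Matrix {x // x ∈ S} {x // x ∈ S} ℝ)
    (hMdef : M = Matrix.of fun a b => (Nat.lcm a.1 b.1 : ℝ))
    (hM : M.IsHermitian) :
    M.det ≠ 0 ∧
    (Finset.univ.filter fun i => hM.eigenvalues i < 0).card =
      (S.filter fun x => (CSdvd S x).ncard = 1).card ∧
    (Finset.univ.filter fun i => 0 < hM.eigenvalues i).card =
      S.card - (S.filter fun x => (CSdvd S x).ncard = 1).card := by
  classical
  have hpos : ∀ x ∈ S, 0 < x := fun x hx => Nat.pos_of_ne_zero (fun h => h0 (h ▸ hx))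
  set d : {x // x ∈ S} → ℝ := fun i => Stmt16Aux.beta S i.1 with hd
  set P : Matrix {x // x ∈ S} {x // x ∈ S} ℝ :=
    Matrix.of (fun i k => if k.1 ∣ i.1 then ((i.1 : ℕ) : ℝ) else 0) with hPdef
  -- P is lower triangular with nonzero diagonal
  have hPtri : P.BlockTriangular OrderDual.toDual := by
    intro i j hij
    have hij' : i < j := hij
    show (if j.1 ∣ i.1 then ((i.1 : ℕ) : ℝ) else 0) = 0
    rw [if_neg]
    intro hdvd
    have h1 : j.1 ≤ i.1 := Nat.le_of_dvd (hpos i.1 i.2) hdvd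
    exact absurd hij' (not_lt.mpr (Subtype.coe_le_coe.mp h1))
  have hPdiag : ∀ i, P i i = ((i.1 : ℕ) : ℝ) := by
    intro i
    show (if i.1 ∣ i.1 then ((i.1 : ℕ) : ℝ) else 0) = _
    rw [if_pos (dvd_refl _)]
  have hPdet : P.det ≠ 0 := by
    rw [Matrix.det_of_lowerTriangular P hPtri, Finset.prod_ne_zero_iff]
    intro i _
    rw [hPdiag i]
    exact Nat.cast_ne_zero.mpr (hpos i.1 i.2).ne'
  -- the key factorization
  have key : M = P * Matrix.diagonal d * Pᵀ := by
    ext i j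
    have hgS : Nat.gcd i.1 j.1 ∈ S := hg i.1 i.2 j.1 j.2
    have hgpos : 0 < Nat.gcd i.1 j.1 := hpos _ hgS
    have entry : (P * Matrix.diagonal d * Pᵀ) i j
        = ∑ k : {x // x ∈ S}, (if k.1 ∣ i.1 then ((i.1 : ℕ) : ℝ) else 0) *
            Stmt16Aux.beta S k.1 * (if k.1 ∣ j.1 then ((j.1 : ℕ) : ℝ) else 0) := by
      rw [Matrix.mul_apply]
      apply Finset.sum_congr rfl
      intro k _
      rw [Matrix.mul_diagonal, Matrix.transpose_apply]
      rfl
    rw [entry]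
    have step : ∀ k : {x // x ∈ S},
        (if k.1 ∣ i.1 then ((i.1 : ℕ) : ℝ) else 0) * Stmt16Aux.beta S k.1 *
          (if k.1 ∣ j.1 then ((j.1 : ℕ) : ℝ) else 0)
        = (fun w => if w ∣ Nat.gcd i.1 j.1
            then ((i.1 : ℕ) : ℝ) * ((j.1 : ℕ) : ℝ) * Stmt16Aux.beta S w else 0) k.1 := by
      intro k
      by_cases h1 : k.1 ∣ i.1 <;> by_cases h2 : k.1 ∣ j.1 <;>
        simp only [h1, h2, if_true, if_false, ite_true, ite_false]
      · rw [if_pos (Nat.dvd_gcd h1 h2)]; ring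
      · rw [if_neg (fun h => h2 (h.trans (Nat.gcd_dvd_right _ _)))]; ring
      · rw [if_neg (fun h => h1 (h.trans (Nat.gcd_dvd_left _ _)))]; ring
      · rw [if_neg (fun h => h1 (h.trans (Nat.gcd_dvd_left _ _)))]; ring
    rw [Finset.sum_congr rfl (fun k _ => step k)]
    rw [Finset.sum_coe_sort S (fun w => if w ∣ Nat.gcd i.1 j.1
      then ((i.1 : ℕ) : ℝ) * ((j.1 : ℕ) : ℝ) * Stmt16Aux.beta S w else 0)]
    rw [← Finset.sum_filter, ← Finset.mul_sum]
    rw [Stmt16Aux.sum_beta_dvd S h0 hgS]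
    -- now M i j = i * j * gcd⁻¹
    rw [hMdef]
    show ((Nat.lcm i.1 j.1 : ℕ) : ℝ) = _
    have hml : (Nat.gcd i.1 j.1) * (Nat.lcm i.1 j.1) = i.1 * j.1 := Nat.gcd_mul_lcm _ _
    have hcast : ((Nat.gcd i.1 j.1 : ℕ) : ℝ) * ((Nat.lcm i.1 j.1 : ℕ) : ℝ)
        = ((i.1 : ℕ) : ℝ) * ((j.1 : ℕ) : ℝ) := by
      rw [← Nat.cast_mul, hml, Nat.cast_mul]
    have hgne : ((Nat.gcd i.1 j.1 : ℕ) : ℝ) ≠ 0 := Nat.cast_ne_zero.mpr hgpos.ne'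
    field_simp
    linarith [hcast]
  -- sign facts for d
  have hsign : ∀ i : {x // x ∈ S},
      (d i < 0 ∧ (CSdvd S i.1).ncard = 1) ∨ (0 < d i ∧ (CSdvd S i.1).ncard ≠ 1) :=
    fun i => Stmt16Aux.beta_sign S h0 hg hdc i.2
  have hdne : ∀ i, d i ≠ 0 := by
    intro i
    rcases hsign i with ⟨h, _⟩ | ⟨h, _⟩
    · exact ne_of_lt h
    · exact (ne_of_lt h).symm
  -- determinant
  have hdet : M.det ≠ 0 := by
    rw [key, Matrix.det_mul, Matrix.det_mul, Matrix.det_transpose, Matrix.det_diagonal]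
    apply mul_ne_zero (mul_ne_zero hPdet _) hPdet
    rw [Finset.prod_ne_zero_iff]
    exact fun i _ => hdne i
  -- spectral theorem
  set U : Matrix {x // x ∈ S} {x // x ∈ S} ℝ :=
    (hM.eigenvectorUnitary : Matrix {x // x ∈ S} {x // x ∈ S} ℝ) with hUdef
  have hUmem := hM.eigenvectorUnitary.2
  have hU1 : star U * U = 1 := (Unitary.mem_iff.mp hUmem).1
  have hU2 : U * star U = 1 := (Unitary.mem_iff.mp hUmem).2
  have hstarU : star U = Uᵀ := by
    rw [Matrix.star_eq_conjTranspose, Matrix.conjTranspose_eq_transpose_of_trivial]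
  have hspec : M = U * Matrix.diagonal hM.eigenvalues * Uᵀ := by
    have h := hM.spectral_theorem
    rw [Unitary.conjStarAlgAut_apply] at h
    rw [hstarU] at h
    have hdg : Matrix.diagonal (RCLike.ofReal ∘ hM.eigenvalues)
        = Matrix.diagonal hM.eigenvalues := by
      congr 1
    rw [hdg] at h
    exact h
  have hUtU : Uᵀ * U = 1 := by rw [← hstarU]; exact hU1
  have hUUt : U * Uᵀ = 1 := by rw [← hstarU]; exact hU2
  have hcong : Matrix.diagonal hM.eigenvalues
      = (Uᵀ * P) * Matrix.diagonal d * (Uᵀ * P)ᵀ := by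
    have h1 : Uᵀ * M * U = Matrix.diagonal hM.eigenvalues := by
      conv_lhs => rw [hspec]
      rw [show Uᵀ * (U * Matrix.diagonal hM.eigenvalues * Uᵀ) * U
          = (Uᵀ * U) * Matrix.diagonal hM.eigenvalues * (Uᵀ * U) by
        simp only [Matrix.mul_assoc]]
      rw [hUtU, Matrix.one_mul, Matrix.mul_one]
    rw [← h1]
    conv_lhs => rw [key]
    rw [Matrix.transpose_mul, Matrix.transpose_transpose]
    simp only [Matrix.mul_assoc]
  have hQdet : IsUnit (Uᵀ * P).det := by
    rw [Matrix.det_mul]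
    apply IsUnit.mul
    · rw [Matrix.det_transpose]
      exact IsUnit.of_mul_eq_one (Uᵀ.det) (by rw [← Matrix.det_mul, hUUt, Matrix.det_one])
    · exact isUnit_iff_ne_zero.mpr hPdet
  have hQtdet : IsUnit ((Uᵀ * P)ᵀ).det := by
    rw [Matrix.det_transpose]; exact hQdet
  have hcong' : Matrix.diagonal d
      = (Uᵀ * P)⁻¹ * Matrix.diagonal hM.eigenvalues * ((Uᵀ * P)⁻¹)ᵀ := by
    rw [hcong, Matrix.transpose_nonsing_inv]
    rw [show (Uᵀ * P)⁻¹ * ((Uᵀ * P) * Matrix.diagonal d * (Uᵀ * P)ᵀ) * ((Uᵀ * P)ᵀ)⁻¹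
        = ((Uᵀ * P)⁻¹ * (Uᵀ * P)) * Matrix.diagonal d * ((Uᵀ * P)ᵀ * ((Uᵀ * P)ᵀ)⁻¹) by
      simp only [Matrix.mul_assoc]]
    rw [Matrix.nonsing_inv_mul _ hQdet, Matrix.mul_nonsing_inv _ hQtdet]
    rw [Matrix.one_mul, Matrix.mul_one]
  -- counting negative eigenvalues
  have hneg_eq : (Finset.univ.filter fun i => hM.eigenvalues i < 0).card
      = (Finset.univ.filter fun i => d i < 0).card := by
    apply le_antisymm
    · exact Stmt16Aux.negcount_le (Uᵀ * P) hM.eigenvalues d hcong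
    · exact Stmt16Aux.negcount_le (Uᵀ * P)⁻¹ d hM.eigenvalues hcong'
  -- counting positive eigenvalues
  have hcongneg : Matrix.diagonal (fun i => -hM.eigenvalues i)
      = (Uᵀ * P) * Matrix.diagonal (fun i => -d i) * (Uᵀ * P)ᵀ := by
    have := congrArg Neg.neg hcong
    rw [show (-(Matrix.diagonal hM.eigenvalues) : Matrix _ _ ℝ)
        = Matrix.diagonal (fun i => -hM.eigenvalues i) by rw [← Matrix.diagonal_neg]] at this
    rw [this]
    rw [show (Matrix.diagonal (fun i => -d i) : Matrix _ _ ℝ) = -(Matrix.diagonal d) by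
      rw [← Matrix.diagonal_neg]]
    rw [Matrix.mul_neg, Matrix.neg_mul]
  have hcongneg' : Matrix.diagonal (fun i => -d i)
      = (Uᵀ * P)⁻¹ * Matrix.diagonal (fun i => -hM.eigenvalues i) * ((Uᵀ * P)⁻¹)ᵀ := by
    have := congrArg Neg.neg hcong'
    rw [show (-(Matrix.diagonal d) : Matrix _ _ ℝ)
        = Matrix.diagonal (fun i => -d i) by rw [← Matrix.diagonal_neg]] at this
    rw [this]
    rw [show (Matrix.diagonal (fun i => -hM.eigenvalues i) : Matrix _ _ ℝ)
        = -(Matrix.diagonal hM.eigenvalues) by rw [← Matrix.diagonal_neg]]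
    rw [Matrix.mul_neg, Matrix.neg_mul]
  have hpos_eq : (Finset.univ.filter fun i => 0 < hM.eigenvalues i).card
      = (Finset.univ.filter fun i => 0 < d i).card := by
    have e1 : (Finset.univ.filter fun i => 0 < hM.eigenvalues i)
        = (Finset.univ.filter fun i => -hM.eigenvalues i < 0) := by
      apply Finset.filter_congr
      intro i _
      rw [neg_lt_zero]
    have e2 : (Finset.univ.filter fun i => 0 < d i)
        = (Finset.univ.filter fun i => -d i < 0) := by
      apply Finset.filter_congr
      intro i _
      rw [neg_lt_zero]
    rw [e1, e2]
    apply le_antisymm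
    · exact Stmt16Aux.negcount_le (Uᵀ * P) (fun i => -hM.eigenvalues i) (fun i => -d i) hcongneg
    · exact Stmt16Aux.negcount_le (Uᵀ * P)⁻¹ (fun i => -d i) (fun i => -hM.eigenvalues i) hcongneg'
  -- translating d-counts to S-counts
  have hcount_neg : (Finset.univ.filter fun i : {x // x ∈ S} => d i < 0).card
      = (S.filter fun x => (CSdvd S x).ncard = 1).card := by
    rw [Stmt16Aux.card_filter_subtype S (fun w => Stmt16Aux.beta S w < 0)]
    congr 1
    apply Finset.filter_congr
    intro x hx
    rcases Stmt16Aux.beta_sign S h0 hg hdc hx with ⟨h1, h2⟩ | ⟨h1, h2⟩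
    · constructor
      · intro _; exact h2
      · intro _; exact h1
    · constructor
      · intro h; linarith
      · intro h; exact absurd h h2
  have hcount_pos : (Finset.univ.filter fun i : {x // x ∈ S} => 0 < d i).card
      = S.card - (S.filter fun x => (CSdvd S x).ncard = 1).card := by
    rw [Stmt16Aux.card_filter_subtype S (fun w => 0 < Stmt16Aux.beta S w)]
    have hsplit := Finset.card_filter_add_card_filter_not
      (s := S) (p := fun x => (CSdvd S x).ncard = 1)
    have e3 : (S.filter fun x => 0 < Stmt16Aux.beta S x)
        = (S.filter fun x => ¬ (CSdvd S x).ncard = 1) := by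
      apply Finset.filter_congr
      intro x hx
      rcases Stmt16Aux.beta_sign S h0 hg hdc hx with ⟨h1, h2⟩ | ⟨h1, h2⟩
      · constructor
        · intro h; linarith
        · intro h; exact absurd h2 h
      · constructor
        · intro _; exact h2
        · intro _; exact h1
    rw [e3]
    omega
  exact ⟨hdet, by rw [hneg_eq, hcount_neg], by rw [hpos_eq, hcount_pos]⟩
end

section
/- Let S be a GCD-closed set of n ≥ 3 distinct positive integers. Then the LCM matrix [S] has at least one positive eigenvalue, and its number of negative eigenvalues i_-([S]) satisfies 2 ≤ i_-([S]) ≤ n − 1. -/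
open scoped Classical

open Matrix in
theorem quad_expand' {ι : Type*} [Fintype ι] [DecidableEq ι]
    {M : Matrix ι ι ℝ} (hM : M.IsHermitian) (x : ι → ℝ) :
    x ⬝ᵥ (M *ᵥ x) = ∑ i, hM.eigenvalues i *
      ((star (hM.eigenvectorUnitary : Matrix ι ι ℝ) *ᵥ x) i)^2 := by
  set U : Matrix ι ι ℝ := (hM.eigenvectorUnitary : Matrix ι ι ℝ) with hU
  have hdec := hM.spectral_theorem
  set y := star U *ᵥ x with hy
  conv_lhs => rw [hdec, Unitary.conjStarAlgAut_apply]
  rw [← mulVec_mulVec, ← mulVec_mulVec, dotProduct_mulVec, ← mulVec_transpose]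
  have htr : Uᵀ = star U := by
    ext i j; simp [Matrix.star_eq_conjTranspose, Matrix.conjTranspose_apply]
  rw [htr, ← hy]
  simp only [RCLike.ofReal_real_eq_id, Function.comp_def, id]
  simp [Matrix.mulVec_diagonal, dotProduct, mul_comm, sq, mul_assoc, mul_left_comm]

open Matrix in
theorem pos_count' {ι : Type*} [Fintype ι] [DecidableEq ι]
    {M : Matrix ι ι ℝ} (hM : M.IsHermitian) (x : ι → ℝ)
    (hx : 0 < x ⬝ᵥ (M *ᵥ x)) :
    1 ≤ (Finset.univ.filter fun i => 0 < hM.eigenvalues i).card := by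
  rw [Finset.one_le_card]
  by_contra h
  rw [Finset.not_nonempty_iff_eq_empty, Finset.filter_eq_empty_iff] at h
  have : x ⬝ᵥ (M *ᵥ x) ≤ 0 := by
    rw [quad_expand' hM x]
    apply Finset.sum_nonpos
    intro i _
    have h1 : hM.eigenvalues i ≤ 0 := le_of_not_gt (h (Finset.mem_univ i))
    exact mul_nonpos_of_nonpos_of_nonneg h1 (sq_nonneg _)
  linarith

open Matrix in
theorem neg_count' {ι : Type*} [Fintype ι] [DecidableEq ι]
    {M : Matrix ι ι ℝ} (hM : M.IsHermitian) (u v : ι → ℝ)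
    (h : ∀ s t : ℝ, ¬(s = 0 ∧ t = 0) →
      (s • u + t • v) ⬝ᵥ (M *ᵥ (s • u + t • v)) < 0) :
    2 ≤ (Finset.univ.filter fun i => hM.eigenvalues i < 0).card := by
  by_contra hcard
  push_neg at hcard
  set U : Matrix ι ι ℝ := (hM.eigenvectorUnitary : Matrix ι ι ℝ)
  set Neg := Finset.univ.filter fun i => hM.eigenvalues i < 0 with hNeg
  have hle1 : Neg.card ≤ 1 := by omega
  set yu := star U *ᵥ u with hyu
  set yv := star U *ᵥ v with hyv
  rcases Neg.eq_empty_or_nonempty with he | ⟨i0, hi0⟩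
  · have := h 1 0 (by simp)
    have h2 : (1:ℝ) • u + (0:ℝ) • v = u := by simp
    rw [h2, quad_expand' hM u] at this
    have : (0:ℝ) ≤ ∑ i, hM.eigenvalues i * ((star U *ᵥ u) i)^2 := by
      apply Finset.sum_nonneg
      intro i _
      have : ¬ hM.eigenvalues i < 0 := by
        intro hlt
        have : i ∈ Neg := by simp [hNeg, hlt]
        simp [he] at this
      exact mul_nonneg (le_of_not_gt this) (sq_nonneg _)
    linarith
  · have huniq : ∀ j ∈ Neg, j = i0 := by
      intro j hj
      exact Finset.card_le_one.mp hle1 j hj i0 hi0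
    set α := yu i0 with hα
    set β := yv i0 with hβ
    by_cases hz : α = 0 ∧ β = 0
    case pos =>
      have hq := h 1 0 (by simp)
      have h2 : (1:ℝ) • u + (0:ℝ) • v = u := by simp
      rw [h2, quad_expand' hM u] at hq
      have hnn : (0:ℝ) ≤ ∑ i, hM.eigenvalues i * ((star U *ᵥ u) i)^2 := by
        apply Finset.sum_nonneg
        intro i _
        rcases lt_or_ge (hM.eigenvalues i) 0 with hlt | hge
        · have : i = i0 := huniq i (by simp [hNeg, hlt])
          subst this
          rw [← hyu, ← hα, hz.1]
          simp
        · exact mul_nonneg hge (sq_nonneg _)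
      linarith
    case neg =>
      have hst : ¬(β = 0 ∧ -α = 0) := by
        intro ⟨h1, h2⟩
        exact hz ⟨by linarith [neg_eq_zero.mp h2], h1⟩
      have hq := h β (-α) hst
      rw [quad_expand' hM _] at hq
      have hlin : star U *ᵥ (β • u + (-α) • v) = β • yu + (-α) • yv := by
        rw [mulVec_add, mulVec_smul, mulVec_smul, hyu, hyv]
      have hnn : (0:ℝ) ≤ ∑ i, hM.eigenvalues i * ((star U *ᵥ (β • u + (-α) • v)) i)^2 := by
        apply Finset.sum_nonneg
        intro i _
        rcases lt_or_ge (hM.eigenvalues i) 0 with hlt | hge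
        · have hii : i = i0 := huniq i (by simp [hNeg, hlt])
          rw [hlin, hii]
          have hz0 : (β • yu + (-α) • yv) i0 = 0 := by
            simp only [Pi.add_apply, Pi.smul_apply, smul_eq_mul, hα, hβ]; ring
          rw [hz0]; simp
        · exact mul_nonneg hge (sq_nonneg _)
      linarith

theorem real_key' (G RA RB P : ℝ) (hG1 : 1 ≤ G) (hP1 : 1 ≤ P) (hPG : P ≤ G)
    (hRA1 : 1 ≤ RA) (hRB1 : RA + 1 ≤ RB) (hPA : P < G * RA) :
    (G*RA) * ((G*(RA*RB)) - G*RB)^2 < ((G*(RA*RB))^2 - (G*RA)*(G*RB)) * (G*RA - P) := by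
  have hG0 : (0:ℝ) < G := by linarith
  have hRA0 : (0:ℝ) < RA := by linarith
  have hRB0 : (0:ℝ) < RB := by linarith
  rcases eq_or_lt_of_le hRA1 with h1 | h2
  · rw [← h1]
    have h3 : (0:ℝ) < G - P := by nlinarith
    have hRB2 : (2:ℝ) ≤ RB := by linarith
    have key : (0:ℝ) < G * G * RB * (RB - 1) * (G - P) :=
      mul_pos (mul_pos (mul_pos (mul_pos hG0 hG0) (by linarith)) (by linarith)) h3
    nlinarith [key]
  · have e1 : G * (RA - 1) ≤ G * RA - P := by nlinarith
    have e2 : RB * (RA - 1) + 1 ≤ RA * RB - 1 := by nlinarith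
    have hRAm : (0:ℝ) < RA - 1 := by linarith
    have hAB1 : (1:ℝ) < RA * RB := by
      have h := mul_le_mul_of_nonneg_right hRA1 (le_of_lt hRB0)
      linarith
    have hG2 : (0:ℝ) < G^2 := by positivity
    have pos1 : (0:ℝ) < G^2 * RA * RB * (RA*RB - 1) :=
      mul_pos (mul_pos (mul_pos hG2 hRA0) hRB0) (by linarith)
    have s1 : G^2 * RA * RB * (RA*RB - 1) * (G * (RA - 1))
        ≤ G^2 * RA * RB * (RA*RB - 1) * (G * RA - P) :=
      mul_le_mul_of_nonneg_left e1 (le_of_lt pos1)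
    have pos2 : (0:ℝ) ≤ G^2 * RA * RB * (G * (RA - 1)) :=
      le_of_lt (mul_pos (mul_pos (mul_pos hG2 hRA0) hRB0) (mul_pos hG0 hRAm))
    have s2 : G^2 * RA * RB * (G * (RA - 1)) * (RB * (RA - 1) + 1)
        ≤ G^2 * RA * RB * (G * (RA - 1)) * (RA * RB - 1) :=
      mul_le_mul_of_nonneg_left e2 pos2
    have hG3 : (0:ℝ) < G^3 := by positivity
    have pos3 : (0:ℝ) < G^3 * RA * RB * (RA - 1) :=
      mul_pos (mul_pos (mul_pos hG3 hRA0) hRB0) hRAm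
    have eq1 : G^2*RA*RB*(RA*RB-1)*(G*(RA-1)) = G^2*RA*RB*(G*(RA-1))*(RA*RB-1) := by ring
    have eq2 : G^2*RA*RB*(G*(RA-1))*(RB*(RA-1)+1)
        = G*RA*(G*(RA*RB) - G*RB)^2 + G^3*RA*RB*(RA-1) := by ring
    linarith [s1, s2, pos3, eq1, eq2]

theorem key_ineq' (m a b : ℕ) (hm0 : 0 < m) (hma : m ∣ a) (hmb : m ∣ b)
    (hmalt : m < a) (hab : a < b) :
    ((a:ℝ)) * (((Nat.lcm a b : ℕ) : ℝ) - b)^2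
      < (((Nat.lcm a b : ℕ):ℝ)^2 - a*b) * ((a:ℝ) - m) := by
  have ha0 : 0 < a := hm0.trans hmalt
  have hb0 : 0 < b := ha0.trans hab
  obtain ⟨g, hgdef⟩ : ∃ g, g = Nat.gcd a b := ⟨_, rfl⟩
  have hg0 : 0 < g := hgdef ▸ Nat.gcd_pos_of_pos_left b ha0
  obtain ⟨α, hα⟩ : g ∣ a := hgdef ▸ Nat.gcd_dvd_left a b
  obtain ⟨β, hβ⟩ : g ∣ b := hgdef ▸ Nat.gcd_dvd_right a b
  have hmg : m ∣ g := hgdef ▸ Nat.dvd_gcd hma hmb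
  have hmleg : m ≤ g := Nat.le_of_dvd hg0 hmg
  have hα0 : 0 < α := by
    rcases Nat.eq_zero_or_pos α with h | h
    · rw [h, Nat.mul_zero] at hα; omega
    · exact h
  have hβα : α < β := by
    have h : g * α < g * β := by rw [← hα, ← hβ]; exact hab
    exact lt_of_mul_lt_mul_left h (Nat.zero_le _)
  have hlcm : Nat.lcm a b = g * (α * β) := by
    have h1 : g * Nat.lcm a b = a * b := hgdef ▸ Nat.gcd_mul_lcm a b
    have h2 : a * b = g * (g * (α * β)) := by rw [hα, hβ]; ring
    rw [h2] at h1
    exact Nat.eq_of_mul_eq_mul_left hg0 h1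
  have hra : (a : ℝ) = (g : ℝ) * (α : ℝ) := by exact_mod_cast hα
  have hrb : (b : ℝ) = (g : ℝ) * (β : ℝ) := by exact_mod_cast hβ
  have hrl : ((Nat.lcm a b : ℕ) : ℝ) = (g : ℝ) * ((α:ℝ) * (β:ℝ)) := by
    rw [hlcm]; push_cast; ring
  rw [hrl, hra, hrb]
  apply real_key'
  · exact_mod_cast hg0
  · exact_mod_cast hm0
  · exact_mod_cast hmleg
  · exact_mod_cast hα0
  · exact_mod_cast hβα
  · rw [← hra]; exact_mod_cast hmalt

set_option maxHeartbeats 2000000 in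
theorem stmt17 (S : Finset ℕ) (h0 : 0 ∉ S)
    (hg : ∀ a ∈ S, ∀ b ∈ S, Nat.gcd a b ∈ S)
    (hn : 3 ≤ S.card)
    (M : Matrix {x // x ∈ S} {x // x ∈ S} ℝ)
    (hMdef : M = Matrix.of fun a b => (Nat.lcm a.1 b.1 : ℝ))
    (hM : M.IsHermitian) :
    1 ≤ (Finset.univ.filter fun i => 0 < hM.eigenvalues i).card ∧
    2 ≤ (Finset.univ.filter fun i => hM.eigenvalues i < 0).card ∧
    (Finset.univ.filter fun i => hM.eigenvalues i < 0).card ≤ S.card - 1 := by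
  -- setup: minimum element divides everything
  have hSne : S.Nonempty := Finset.card_pos.mp (by omega)
  obtain ⟨m, hmdef⟩ : ∃ m, m = S.min' hSne := ⟨_, rfl⟩
  have hmS : m ∈ S := hmdef ▸ S.min'_mem hSne
  have hm0 : 0 < m := Nat.pos_of_ne_zero (fun h => h0 (h ▸ hmS))
  have hmin : ∀ x ∈ S, m ≤ x := fun x hx => hmdef ▸ S.min'_le x hx
  have hmdvd : ∀ x ∈ S, m ∣ x := by
    intro x hx
    have h1 : Nat.gcd m x ∈ S := hg m hmS x hx
    have h2 : m ≤ Nat.gcd m x := hmin _ h1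
    have h3 : Nat.gcd m x ≤ m := Nat.gcd_le_left x hm0
    have h4 : Nat.gcd m x = m := le_antisymm h3 h2
    exact h4 ▸ Nat.gcd_dvd_right m x
  -- pick a and b
  have hT1ne : (S.erase m).Nonempty := by
    rw [← Finset.card_pos, Finset.card_erase_of_mem hmS]; omega
  obtain ⟨a, hadef⟩ : ∃ a, a = (S.erase m).min' hT1ne := ⟨_, rfl⟩
  have haT1 : a ∈ S.erase m := hadef ▸ Finset.min'_mem _ _
  have haS : a ∈ S := Finset.mem_of_mem_erase haT1
  have hma : m < a := lt_of_le_of_ne (hmin _ haS) (Ne.symm (Finset.ne_of_mem_erase haT1))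
  have hT2ne : ((S.erase m).erase a).Nonempty := by
    rw [← Finset.card_pos, Finset.card_erase_of_mem haT1, Finset.card_erase_of_mem hmS]
    omega
  obtain ⟨b, hbdef⟩ : ∃ b, b = ((S.erase m).erase a).min' hT2ne := ⟨_, rfl⟩
  have hbT2 : b ∈ (S.erase m).erase a := hbdef ▸ Finset.min'_mem _ _
  have hbT1 : b ∈ S.erase m := Finset.mem_of_mem_erase hbT2
  have hbS : b ∈ S := Finset.mem_of_mem_erase hbT1
  have hab : a < b :=
    lt_of_le_of_ne (hadef ▸ Finset.min'_le _ _ hbT1) (Ne.symm (Finset.ne_of_mem_erase hbT2))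
  have ha0 : 0 < a := hm0.trans hma
  have hb0 : 0 < b := ha0.trans hab
  -- lcm facts
  have lcm_of_dvd : ∀ x y : ℕ, x ∣ y → Nat.lcm x y = y := fun x y h =>
    Nat.dvd_antisymm (Nat.lcm_dvd h dvd_rfl) (Nat.dvd_lcm_right _ _)
  have hlmm : Nat.lcm m m = m := Nat.lcm_self m
  have hlaa : Nat.lcm a a = a := Nat.lcm_self a
  have hlbb : Nat.lcm b b = b := Nat.lcm_self b
  have hlma : Nat.lcm m a = a := lcm_of_dvd _ _ (hmdvd a haS)
  have hlam : Nat.lcm a m = a := by rw [Nat.lcm_comm]; exact hlma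
  have hlmb : Nat.lcm m b = b := lcm_of_dvd _ _ (hmdvd b hbS)
  have hlbm : Nat.lcm b m = b := by rw [Nat.lcm_comm]; exact hlmb
  have hlba : Nat.lcm b a = Nat.lcm a b := Nat.lcm_comm b a
  -- real abbreviations
  obtain ⟨P, hPdef⟩ : ∃ P : ℝ, P = (m : ℝ) := ⟨_, rfl⟩
  obtain ⟨A, hAdef⟩ : ∃ A : ℝ, A = (a : ℝ) := ⟨_, rfl⟩
  obtain ⟨B, hBdef⟩ : ∃ B : ℝ, B = (b : ℝ) := ⟨_, rfl⟩
  obtain ⟨L, hLdef⟩ : ∃ L : ℝ, L = ((Nat.lcm a b : ℕ) : ℝ) := ⟨_, rfl⟩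
  have hP0 : (0:ℝ) < P := by rw [hPdef]; exact_mod_cast hm0
  have hPA : P < A := by rw [hPdef, hAdef]; exact_mod_cast hma
  have hAB : A < B := by rw [hAdef, hBdef]; exact_mod_cast hab
  have hBL : B ≤ L := by
    rw [hBdef, hLdef]
    have h2 : 0 < Nat.lcm a b := Nat.lcm_pos ha0 hb0
    exact_mod_cast Nat.le_of_dvd h2 (Nat.dvd_lcm_right a b)
  have key : A * (L - B)^2 < (L^2 - A*B) * (A - P) := by
    rw [hAdef, hBdef, hLdef, hPdef]
    exact key_ineq' m a b hm0 (hmdvd a haS) (hmdvd b hbS) hma hab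
  have hA0 : (0:ℝ) < A := lt_trans hP0 hPA
  have hAP0 : (0:ℝ) < A - P := by linarith
  -- indices and basis vectors
  obtain ⟨pI, hpIdef⟩ : ∃ i : {x // x ∈ S}, i = ⟨m, hmS⟩ := ⟨_, rfl⟩
  obtain ⟨aI, haIdef⟩ : ∃ i : {x // x ∈ S}, i = ⟨a, haS⟩ := ⟨_, rfl⟩
  obtain ⟨bI, hbIdef⟩ : ∃ i : {x // x ∈ S}, i = ⟨b, hbS⟩ := ⟨_, rfl⟩
  obtain ⟨ep, hepdef⟩ : ∃ e : {x // x ∈ S} → ℝ, e = Pi.single pI 1 := ⟨_, rfl⟩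
  obtain ⟨ea, headef⟩ : ∃ e : {x // x ∈ S} → ℝ, e = Pi.single aI 1 := ⟨_, rfl⟩
  obtain ⟨eb, hebdef⟩ : ∃ e : {x // x ∈ S} → ℝ, e = Pi.single bI 1 := ⟨_, rfl⟩
  -- quadratic form values
  have qval : ∀ cp ca cb : ℝ,
      dotProduct (cp • ep + ca • ea + cb • eb)
        (Matrix.mulVec M (cp • ep + ca • ea + cb • eb))
      = cp^2*P + ca^2*A + cb^2*B + 2*A*cp*ca + 2*B*cp*cb + 2*L*ca*cb := by
    intro cp ca cb
    rw [hepdef, headef, hebdef]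
    simp only [Matrix.mulVec_add, Matrix.mulVec_smul, Matrix.mulVec_single_one, Matrix.col_apply,
      add_dotProduct, smul_dotProduct, single_dotProduct,
      Pi.add_apply, Pi.smul_apply, smul_eq_mul, mul_one]
    rw [hMdef]
    simp only [Matrix.of_apply]
    rw [hpIdef, haIdef, hbIdef]
    dsimp only
    rw [hlmm, hlaa, hlbb, hlma, hlam, hlmb, hlbm, hlba]
    rw [hPdef, hAdef, hBdef, hLdef]
    ring
  -- constants
  obtain ⟨c1, hc1def⟩ : ∃ c : ℝ, c = (B - L)/(A - P) := ⟨_, rfl⟩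
  obtain ⟨c2, hc2def⟩ : ∃ c : ℝ, c = -(c1*A + L)/A := ⟨_, rfl⟩
  have hc1 : c1 * (A - P) = B - L := by
    rw [hc1def]; field_simp
  have hc2 : c2 * A = -(c1*A + L) := by
    rw [hc2def]; field_simp
  obtain ⟨Qv, hQvdef⟩ : ∃ q : ℝ, q = c1^2*P + c2^2*A + B + 2*A*c1*c2 + 2*B*c1 + 2*L*c2 :=
    ⟨_, rfl⟩
  have hQvkey : A * Qv * (A-P) = -((L^2 - A*B)*(A-P) - A*(L-B)^2) := by
    rw [hQvdef, hc2def, hc1def]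
    field_simp
    ring
  have hQv0 : Qv < 0 := by
    by_contra hcon
    push_neg at hcon
    have hfac : (0:ℝ) < A * (A-P) := mul_pos hA0 hAP0
    have h1 : 0 ≤ Qv * (A * (A-P)) := mul_nonneg hcon hfac.le
    have h2 : A * Qv * (A-P) < 0 := by rw [hQvkey]; linarith [key]
    nlinarith [h1, h2]
  -- positive eigenvalue
  have hpos : 1 ≤ (Finset.univ.filter fun i => 0 < hM.eigenvalues i).card := by
    apply pos_count' hM ((1:ℝ) • ep + (0:ℝ) • ea + (0:ℝ) • eb)
    rw [qval]
    linarith [hP0]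
  -- two negative eigenvalues
  have hneg : 2 ≤ (Finset.univ.filter fun i => hM.eigenvalues i < 0).card := by
    apply neg_count' hM ((1:ℝ) • ep + (-1:ℝ) • ea + (0:ℝ) • eb) (c1 • ep + c2 • ea + (1:ℝ) • eb)
    intro s t hst
    have hcomb : s • ((1:ℝ) • ep + (-1:ℝ) • ea + (0:ℝ) • eb)
        + t • (c1 • ep + c2 • ea + (1:ℝ) • eb)
        = (s + t*c1) • ep + (-s + t*c2) • ea + t • eb := by
      ext i
      simp only [Pi.add_apply, Pi.smul_apply, smul_eq_mul, mul_add]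
      ring
    rw [hcomb, qval]
    have hcross : c1*(P-A) + (B-L) = 0 := by linear_combination -hc1
    have hsplit : (s + t*c1)^2*P + (-s + t*c2)^2*A + t^2*B + 2*A*(s + t*c1)*(-s + t*c2)
        + 2*B*(s + t*c1)*t + 2*L*(-s + t*c2)*t
        = s^2*(P-A) + t^2*Qv + 2*s*t*(c1*(P-A) + (B-L)) := by
      rw [hQvdef]; ring
    rw [hsplit, hcross]
    rcases eq_or_ne t 0 with ht | ht
    · have hs : s ≠ 0 := fun h => hst ⟨h, ht⟩
      have h2 : 0 < s^2 := by
        rcases lt_or_gt_of_ne hs with h | h <;> nlinarith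
      subst ht
      nlinarith [h2, hAP0]
    · have h2 : 0 < t^2 := by
        rcases lt_or_gt_of_ne ht with h | h <;> nlinarith
      have h3 : t^2*Qv < 0 := mul_neg_of_pos_of_neg h2 hQv0
      have h4 : s^2*(P-A) ≤ 0 := by nlinarith [sq_nonneg s, hAP0]
      linarith
  -- counting
  refine ⟨hpos, hneg, ?_⟩
  have hdisj : Disjoint (Finset.univ.filter fun i => 0 < hM.eigenvalues i)
      (Finset.univ.filter fun i => hM.eigenvalues i < 0) := by
    rw [Finset.disjoint_left]
    intro i hi1 hi2
    simp only [Finset.mem_filter] at hi1 hi2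
    linarith [hi1.2, hi2.2]
  have h1 := Finset.card_union_of_disjoint hdisj
  have h2 := Finset.card_le_card (Finset.subset_univ
    ((Finset.univ.filter fun i => 0 < hM.eigenvalues i)
      ∪ (Finset.univ.filter fun i => hM.eigenvalues i < 0)))
  rw [Finset.card_univ, Fintype.card_coe] at h2
  omega
end

section
/- Let p, q be distinct primes, m > 1 an integer, and S = {p^k q^l : 0 ≤ k, l ≤ m−1}. Then S is GCD closed, the LCM matrix [S] is invertible, and its inertia is i_-([S]) = 2(m−1) negative eigenvalues and i_+([S]) = (m−1)^2 + 1 positive eigenvalues. -/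
open scoped Classical

open Finset Matrix

noncomputable def extZero {n : Type*} (P : n → Prop) : ({i // P i} → ℝ) →ₗ[ℝ] (n → ℝ) where
  toFun u := fun i => if h : P i then u ⟨i, h⟩ else 0
  map_add' u v := by funext i; by_cases h : P i <;> simp [h]
  map_smul' c u := by funext i; by_cases h : P i <;> simp [h]

lemma extZero_apply_pos {n : Type*} (P : n → Prop) (u) {i : n} (h : P i) :
    extZero P u i = u ⟨i, h⟩ := by simp [extZero, h]

lemma extZero_apply_neg {n : Type*} (P : n → Prop) (u) {i : n} (h : ¬ P i) :
    extZero P u i = 0 := by simp [extZero, h]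

lemma extZero_inj {n : Type*} (P : n → Prop) : Function.Injective (extZero P) := by
  intro u v huv
  funext i
  have := congrFun huv i.1
  rwa [extZero_apply_pos P u i.2, extZero_apply_pos P v i.2] at this

lemma sylv_aux {n κ : Type*} [Fintype n] [Fintype κ]
    (d : n → ℝ) (e : κ → ℝ) (φ : (n → ℝ) →ₗ[ℝ] (κ → ℝ)) (hφ : Function.Injective φ)
    (h : ∀ x : n → ℝ, ∑ i, d i * x i ^ 2 = ∑ j, e j * (φ x j) ^ 2) :
    (Finset.univ.filter fun i => d i < 0).card ≤ (Finset.univ.filter fun j => e j < 0).card := by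
  by_contra hlt
  push_neg at hlt
  have hcardP : Fintype.card {i // d i < 0} = (Finset.univ.filter fun i => d i < 0).card :=
    Fintype.card_subtype _
  have hcardQ : Fintype.card {j // ¬ e j < 0} + (Finset.univ.filter fun j => e j < 0).card
      = Fintype.card κ := by
    rw [Fintype.card_subtype]
    have := Finset.card_filter_add_card_filter_not (s := (Finset.univ : Finset κ))
      (p := fun j => e j < 0)
    simp only [Finset.card_univ, Finset.filter_congr_decidable] at this ⊢
    omega
  set T : (({i // d i < 0} → ℝ) × ({j // ¬ e j < 0} → ℝ)) →ₗ[ℝ] (κ → ℝ) :=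
    (φ.comp ((extZero _).comp (LinearMap.fst ℝ _ _)))
      - ((extZero _).comp (LinearMap.snd ℝ _ _)) with hT
  have hTnotinj : ¬ Function.Injective T := by
    intro hinj
    have hle := LinearMap.finrank_le_finrank_of_injective hinj
    rw [Module.finrank_prod, Module.finrank_pi, Module.finrank_pi, Module.finrank_pi,
      hcardP] at hle
    omega
  rw [Function.not_injective_iff] at hTnotinj
  obtain ⟨a, b, hab, hne⟩ := hTnotinj
  set z := a - b with hz
  have hz0 : T z = 0 := by rw [hz, map_sub, hab, sub_self]
  have hzne : z ≠ 0 := sub_ne_zero.2 hne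
  obtain ⟨u, v⟩ := z
  have heq : φ (extZero _ u) = extZero _ v := by
    have := hz0
    simp only [hT, LinearMap.sub_apply, LinearMap.comp_apply, LinearMap.fst_apply,
      LinearMap.snd_apply, sub_eq_zero] at this
    exact this
  have hu : u ≠ 0 := by
    intro hu0
    apply hzne
    have h0 : extZero (fun j => ¬ e j < 0) v = 0 := by
      rw [← heq, hu0, map_zero, map_zero]
    have hv : v = 0 := extZero_inj _ (by rw [h0, map_zero])
    simp [hu0, hv, Prod.ext_iff]
  obtain ⟨i₀, hi₀⟩ := Function.ne_iff.1 hu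
  have hLHS : ∑ i, d i * (extZero _ u i) ^ 2 < 0 := by
    have : ∑ i, d i * (extZero (fun i => d i < 0) u i) ^ 2 < ∑ _i : n, (0:ℝ) := by
      apply Finset.sum_lt_sum
      · intro i _
        by_cases hi : d i < 0
        · exact mul_nonpos_of_nonpos_of_nonneg (le_of_lt hi) (sq_nonneg _)
        · rw [extZero_apply_neg _ u hi]; simp
      · refine ⟨i₀.1, Finset.mem_univ _, ?_⟩
        rw [extZero_apply_pos _ u i₀.2]
        exact mul_neg_of_neg_of_pos i₀.2
          (lt_of_le_of_ne (sq_nonneg _) (Ne.symm (pow_ne_zero 2 hi₀)))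
    simpa using this
  have hRHS : (0:ℝ) ≤ ∑ j, e j * (extZero (fun j => ¬ e j < 0) v j) ^ 2 := by
    apply Finset.sum_nonneg
    intro j _
    by_cases hj : ¬ e j < 0
    · exact mul_nonneg (not_lt.1 hj) (sq_nonneg _)
    · rw [extZero_apply_neg _ v hj]; simp
  have hx := h (extZero _ u)
  rw [heq] at hx
  linarith

lemma sylv_mat {n : Type*} [Fintype n] [DecidableEq n] (d e : n → ℝ) (B : Matrix n n ℝ)
    (hB : IsUnit B.det) (h : Matrix.diagonal d = Bᵀ * Matrix.diagonal e * B) :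
    (Finset.univ.filter fun i => d i < 0).card = (Finset.univ.filter fun j => e j < 0).card := by
  have key : ∀ (d' e' : n → ℝ) (B' : Matrix n n ℝ), IsUnit B'.det →
      Matrix.diagonal d' = B'ᵀ * Matrix.diagonal e' * B' →
      (Finset.univ.filter fun i => d' i < 0).card ≤ (Finset.univ.filter fun j => e' j < 0).card := by
    intro d' e' B' hB' h'
    have hinj : Function.Injective B'.mulVecLin := by
      intro x y hxy
      have h3 : B'⁻¹.mulVec (B'.mulVec x) = B'⁻¹.mulVec (B'.mulVec y) := by
        simp only [Matrix.mulVecLin_apply] at hxy; rw [hxy]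
      rwa [Matrix.mulVec_mulVec, Matrix.mulVec_mulVec, Matrix.nonsing_inv_mul _ hB',
        Matrix.one_mulVec, Matrix.one_mulVec] at h3
    apply sylv_aux d' e' B'.mulVecLin hinj
    intro x
    have lhs : ∑ i, d' i * x i ^ 2 = x ⬝ᵥ (Matrix.diagonal d').mulVec x := by
      simp only [dotProduct, Matrix.mulVec_diagonal]
      exact Finset.sum_congr rfl fun i _ => by ring
    have rhs : x ⬝ᵥ (B'ᵀ * Matrix.diagonal e' * B').mulVec x
        = ∑ j, e' j * (B'.mulVecLin x j) ^ 2 := by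
      rw [Matrix.mul_assoc, ← Matrix.mulVec_mulVec, ← Matrix.mulVec_mulVec,
        Matrix.dotProduct_mulVec, Matrix.vecMul_transpose]
      simp only [dotProduct, Matrix.mulVec_diagonal, Matrix.mulVecLin_apply]
      exact Finset.sum_congr rfl fun j _ => by ring
    rw [lhs, h', rhs]
  have h2 : Matrix.diagonal e = (B⁻¹)ᵀ * Matrix.diagonal d * B⁻¹ := by
    rw [h, Matrix.transpose_nonsing_inv]
    symm
    calc Bᵀ⁻¹ * (Bᵀ * Matrix.diagonal e * B) * B⁻¹
        = (Bᵀ⁻¹ * Bᵀ) * Matrix.diagonal e * (B * B⁻¹) := by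
          simp only [Matrix.mul_assoc]
      _ = Matrix.diagonal e := by
          rw [Matrix.nonsing_inv_mul _ (by rwa [Matrix.det_transpose]),
            Matrix.mul_nonsing_inv _ hB, Matrix.one_mul, Matrix.mul_one]
  exact le_antisymm (key d e B hB h) (key e d B⁻¹ (B.isUnit_nonsing_inv_det hB) h2)


lemma lcm_pp {p q : ℕ} (hp : p.Prime) (hq : q.Prime) (hpq : p ≠ q) (a b c d : ℕ) :
    Nat.lcm (p ^ a * q ^ b) (p ^ c * q ^ d) = p ^ max a c * q ^ max b d := by
  have hcop : Nat.Coprime p q := (Nat.coprime_primes hp hq).2 hpq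
  have hcop2 : Nat.Coprime (p ^ max a c) (q ^ max b d) := Nat.Coprime.pow _ _ hcop
  apply Nat.dvd_antisymm
  · apply Nat.lcm_dvd
    · exact mul_dvd_mul (pow_dvd_pow p (le_max_left a c)) (pow_dvd_pow q (le_max_left b d))
    · exact mul_dvd_mul (pow_dvd_pow p (le_max_right a c)) (pow_dvd_pow q (le_max_right b d))
  · apply Nat.Coprime.mul_dvd_of_dvd_of_dvd hcop2
    · rcases max_cases a c with ⟨h1, _⟩ | ⟨h1, _⟩
      · rw [h1]; exact dvd_trans (dvd_mul_right _ _) (Nat.dvd_lcm_left _ _)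
      · rw [h1]; exact dvd_trans (dvd_mul_right _ _) (Nat.dvd_lcm_right _ _)
    · rcases max_cases b d with ⟨h1, _⟩ | ⟨h1, _⟩
      · rw [h1]; exact dvd_trans (dvd_mul_left _ _) (Nat.dvd_lcm_left _ _)
      · rw [h1]; exact dvd_trans (dvd_mul_left _ _) (Nat.dvd_lcm_right _ _)

lemma gcd_pp {p q : ℕ} (hp : p.Prime) (hq : q.Prime) (hpq : p ≠ q) (a b c d : ℕ) :
    Nat.gcd (p ^ a * q ^ b) (p ^ c * q ^ d) = p ^ min a c * q ^ min b d := by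
  have hml : p ^ max a c * q ^ max b d ≠ 0 :=
    Nat.mul_ne_zero (pow_ne_zero _ hp.pos.ne') (pow_ne_zero _ hq.pos.ne')
  have had : a ⊓ c + (a ⊔ c) = a + c := by omega
  have hbd : b ⊓ d + (b ⊔ d) = b + d := by omega
  have hL := Nat.gcd_mul_lcm (p ^ a * q ^ b) (p ^ c * q ^ d)
  rw [lcm_pp hp hq hpq a b c d] at hL
  apply Nat.eq_of_mul_eq_mul_right (Nat.pos_of_ne_zero hml)
  rw [hL,
    show p ^ (a ⊓ c) * q ^ (b ⊓ d) * (p ^ (a ⊔ c) * q ^ (b ⊔ d))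
      = p ^ (a ⊓ c + (a ⊔ c)) * q ^ (b ⊓ d + (b ⊔ d)) from by ring, had, hbd]
  ring

lemma pq_inj {p q : ℕ} (hp : p.Prime) (hq : q.Prime) (hpq : p ≠ q) {a b c d : ℕ}
    (h : p ^ a * q ^ b = p ^ c * q ^ d) : a = c ∧ b = d := by
  have h0 : p ^ a * q ^ b ≠ 0 := Nat.mul_ne_zero (pow_ne_zero _ hp.pos.ne') (pow_ne_zero _ hq.pos.ne')
  have hqp : q ≠ p := Ne.symm hpq
  constructor
  · have h2 := congrArg (fun x => x.factorization p) h
    simp [Nat.factorization_mul (pow_ne_zero _ hp.pos.ne') (pow_ne_zero _ hq.pos.ne'),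
      Nat.factorization_pow, hp.factorization, hq.factorization, Finsupp.coe_add,
      Finsupp.coe_smul, Pi.add_apply, Pi.smul_apply, Finsupp.single_apply, if_pos rfl,
      if_neg hqp, smul_eq_mul] at h2
    omega
  · have h2 := congrArg (fun x => x.factorization q) h
    simp [Nat.factorization_mul (pow_ne_zero _ hp.pos.ne') (pow_ne_zero _ hq.pos.ne'),
      Nat.factorization_pow, hp.factorization, hq.factorization, Finsupp.coe_add,
      Finsupp.coe_smul, Pi.add_apply, Pi.smul_apply, Finsupp.single_apply, if_pos rfl,
      if_neg hpq, smul_eq_mul] at h2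
    omega

lemma tele (r : ℝ) (m s : ℕ) (hs : s < m) :
    ∑ t ∈ Finset.range m,
      (if s ≤ t then (r ^ t - r ^ (t + 1) + if t = m - 1 then r ^ m else 0) else 0) = r ^ s := by
  rw [← Finset.sum_filter]
  have hfil : (Finset.range m).filter (fun t => s ≤ t) = Finset.Ico s m := by
    ext t; simp [Finset.mem_Ico, Finset.mem_range]; omega
  rw [hfil, Finset.sum_add_distrib, Finset.sum_ite_eq' (Finset.Ico s m) (m - 1)]
  have hmem : m - 1 ∈ Finset.Ico s m := by simp [Finset.mem_Ico]; omega
  rw [if_pos hmem, Finset.sum_Ico_eq_sub _ (le_of_lt hs),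
    Finset.sum_range_sub' (fun t => r ^ t), Finset.sum_range_sub' (fun t => r ^ t)]
  ring

theorem stmt18 (p q m : ℕ) (hp : p.Prime) (hq : q.Prime) (hpq : p ≠ q)
    (hm : 1 < m)
    (S : Finset ℕ)
    (hS : S = (Finset.range m ×ˢ Finset.range m).image fun kl => p ^ kl.1 * q ^ kl.2)
    (M : Matrix {x // x ∈ S} {x // x ∈ S} ℝ)
    (hMdef : M = Matrix.of fun a b => (Nat.lcm a.1 b.1 : ℝ))
    (hM : M.IsHermitian) :
    (∀ a ∈ S, ∀ b ∈ S, Nat.gcd a b ∈ S) ∧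
    M.det ≠ 0 ∧
    (Finset.univ.filter fun i => hM.eigenvalues i < 0).card = 2 * (m - 1) ∧
    (Finset.univ.filter fun i => 0 < hM.eigenvalues i).card = (m - 1) ^ 2 + 1 := by
  -- basic facts
  have hr1 : (1:ℝ) < (p:ℝ) := by exact_mod_cast hp.one_lt
  have hr2 : (1:ℝ) < (q:ℝ) := by exact_mod_cast hq.one_lt
  -- membership description
  have hmem : ∀ x : ℕ, x ∈ S ↔ ∃ k l : ℕ, k < m ∧ l < m ∧ p ^ k * q ^ l = x := by
    intro x
    rw [hS]
    simp only [Finset.mem_image, Finset.mem_product, Finset.mem_range]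
    constructor
    · rintro ⟨⟨k, l⟩, ⟨hk, hl⟩, hx⟩; exact ⟨k, l, hk, hl, hx⟩
    · rintro ⟨k, l, hk, hl, hx⟩; exact ⟨⟨k, l⟩, ⟨hk, hl⟩, hx⟩
  -- GCD closed
  have hgcd : ∀ a ∈ S, ∀ b ∈ S, Nat.gcd a b ∈ S := by
    intro a ha b hb
    obtain ⟨k, l, hk, hl, rfl⟩ := (hmem a).1 ha
    obtain ⟨k', l', hk', hl', rfl⟩ := (hmem b).1 hb
    rw [gcd_pp hp hq hpq]
    exact (hmem _).2 ⟨min k k', min l l', lt_of_le_of_lt (min_le_left _ _) hk,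
      lt_of_le_of_lt (min_le_left _ _) hl, rfl⟩
  refine ⟨hgcd, ?_⟩
  -- the index equivalence
  have hmapmem : ∀ t : Fin m × Fin m, p ^ (t.1 : ℕ) * q ^ (t.2 : ℕ) ∈ S :=
    fun t => (hmem _).2 ⟨t.1, t.2, t.1.isLt, t.2.isLt, rfl⟩
  set f : Fin m × Fin m → {x // x ∈ S} := fun t => ⟨p ^ (t.1 : ℕ) * q ^ (t.2 : ℕ), hmapmem t⟩ with hf
  have hfbij : Function.Bijective f := by
    constructor
    · intro s t hst
      have := congrArg Subtype.val hst
      obtain ⟨h1, h2⟩ := pq_inj hp hq hpq this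
      exact Prod.ext (Fin.ext h1) (Fin.ext h2)
    · intro a
      obtain ⟨k, l, hk, hl, hx⟩ := (hmem a.1).1 a.2
      exact ⟨(⟨k, hk⟩, ⟨l, hl⟩), Subtype.ext hx⟩
  set eqv : (Fin m × Fin m) ≃ {x // x ∈ S} := Equiv.ofBijective f hfbij with heqv
  have heqv_apply : ∀ t, (eqv t : ℕ) = p ^ (t.1 : ℕ) * q ^ (t.2 : ℕ) := fun t => rfl
  have hsymm : ∀ a : {x // x ∈ S}, p ^ ((eqv.symm a).1 : ℕ) * q ^ ((eqv.symm a).2 : ℕ) = (a : ℕ) := by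
    intro a
    have := congrArg Subtype.val (eqv.apply_symm_apply a)
    rwa [heqv_apply] at this
  -- triangular matrix and diagonal weights
  set L : Matrix (Fin m) (Fin m) ℝ := fun t i => if (i:ℕ) ≤ (t:ℕ) then 1 else 0 with hL
  have hdetL : L.det = 1 := by
    rw [Matrix.det_of_lowerTriangular L (by
      intro i j hij
      have hij2 : i < j := hij
      simp only [hL]
      rw [if_neg (by
        have := Fin.lt_def.1 hij2
        omega)])]
    simp [hL]
  set c : ℝ → Fin m → ℝ :=
    fun r t => r ^ (t:ℕ) - r ^ ((t:ℕ)+1) + (if (t:ℕ) = m - 1 then r ^ m else 0) with hc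
  have hcneg : ∀ (r : ℝ), 1 < r → ∀ t : Fin m, (t:ℕ) ≠ m - 1 → c r t < 0 := by
    intro r hr t ht
    simp only [hc, if_neg ht, add_zero, sub_neg]
    exact pow_lt_pow_right₀ hr (Nat.lt_succ_self _)
  have hcpos : ∀ (r : ℝ), 1 < r → ∀ t : Fin m, (t:ℕ) = m - 1 → 0 < c r t := by
    intro r hr t ht
    have ht1 : (t:ℕ) + 1 = m := by omega
    have : c r t = r ^ (t:ℕ) := by
      simp only [hc, if_pos ht, ht1]; ring
    rw [this]
    positivity
  have hcne : ∀ (r : ℝ), 1 < r → ∀ t : Fin m, c r t ≠ 0 := by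
    intro r hr t
    by_cases ht : (t:ℕ) = m - 1
    · exact ne_of_gt (hcpos r hr t ht)
    · exact ne_of_lt (hcneg r hr t ht)
  -- the key scalar identity
  have hkey : ∀ (r : ℝ), ∀ i j : Fin m,
      ∑ t : Fin m, L t i * c r t * L t j = r ^ (max (i:ℕ) (j:ℕ)) := by
    intro r i j
    have hstep : ∀ t : Fin m, L t i * c r t * L t j =
        (fun u : ℕ => if max (i:ℕ) (j:ℕ) ≤ u then
          (r ^ u - r ^ (u+1) + if u = m - 1 then r ^ m else 0) else 0) (t:ℕ) := by
      intro t
      simp only [hL, hc]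
      beta_reduce
      split_ifs
      all_goals try ring
      all_goals exfalso
      all_goals simp only [max_le_iff, not_and_or, not_le] at *
      all_goals omega
    calc ∑ t : Fin m, L t i * c r t * L t j
        = ∑ t : Fin m, (fun u : ℕ => if max (i:ℕ) (j:ℕ) ≤ u then
            (r ^ u - r ^ (u+1) + if u = m - 1 then r ^ m else 0) else 0) (t:ℕ) :=
          Finset.sum_congr rfl (fun t _ => hstep t)
      _ = ∑ u ∈ Finset.range m, (if max (i:ℕ) (j:ℕ) ≤ u then
            (r ^ u - r ^ (u+1) + if u = m - 1 then r ^ m else 0) else 0) :=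
          Fin.sum_univ_eq_sum_range (fun u : ℕ => if max (i:ℕ) (j:ℕ) ≤ u then
            (r ^ u - r ^ (u+1) + if u = m - 1 then r ^ m else 0) else 0) m
      _ = r ^ (max (i:ℕ) (j:ℕ)) := tele r m _ (by have := i.isLt; have := j.isLt; omega)
  -- weights
  set w : Fin m × Fin m → ℝ := fun t => c (p:ℝ) t.1 * c (q:ℝ) t.2 with hw
  set wn : {x // x ∈ S} → ℝ := fun a => w (eqv.symm a) with hwn
  -- congruence matrix
  set KK : Matrix (Fin m × Fin m) (Fin m × Fin m) ℝ :=
    Matrix.kroneckerMap (· * ·) L L with hKK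
  set G : Matrix {x // x ∈ S} {x // x ∈ S} ℝ := (Matrix.reindex eqv eqv) KK with hG
  have hdetG : G.det = 1 := by
    rw [hG, Matrix.det_reindex_self, hKK, Matrix.det_kronecker, hdetL]
    simp
  have hGapp : ∀ (t : Fin m × Fin m) (a : {x // x ∈ S}),
      G (eqv t) a = L t.1 (eqv.symm a).1 * L t.2 (eqv.symm a).2 := by
    intro t a
    simp [hG, hKK, Matrix.reindex_apply, Matrix.submatrix_apply, Matrix.kroneckerMap_apply]
  -- the congruence
  have hcong : M = Gᵀ * Matrix.diagonal wn * G := by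
    ext a b
    rw [Matrix.mul_assoc, Matrix.mul_apply]
    have hterm : ∀ k : {x // x ∈ S}, Gᵀ a k * (Matrix.diagonal wn * G) k b = G k a * (wn k * G k b) := by
      intro k
      rw [Matrix.transpose_apply, Matrix.diagonal_mul]
    rw [Finset.sum_congr rfl (fun k _ => hterm k)]
    rw [← Equiv.sum_comp eqv (fun k => G k a * (wn k * G k b))]
    have hsum : ∑ t : Fin m × Fin m, G (eqv t) a * (wn (eqv t) * G (eqv t) b)
        = (∑ t1 : Fin m, L t1 (eqv.symm a).1 * c (p:ℝ) t1 * L t1 (eqv.symm b).1)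
          * (∑ t2 : Fin m, L t2 (eqv.symm a).2 * c (q:ℝ) t2 * L t2 (eqv.symm b).2) := by
      rw [Fintype.sum_prod_type, Finset.sum_mul_sum]
      apply Finset.sum_congr rfl
      intro t1 _
      apply Finset.sum_congr rfl
      intro t2 _
      rw [hGapp (t1, t2) a, hGapp (t1, t2) b]
      simp only [hwn, hw, Equiv.symm_apply_apply]
      ring
    rw [hsum, hkey, hkey]
    have ha := hsymm a
    have hb := hsymm b
    rw [hMdef]
    show ((Nat.lcm a.1 b.1 : ℕ) : ℝ) = _
    rw [← ha, ← hb, lcm_pp hp hq hpq]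
    push_cast
    ring
  -- determinant nonzero
  have hwnne : ∀ a : {x // x ∈ S}, wn a ≠ 0 := by
    intro a
    exact mul_ne_zero (hcne _ hr1 _) (hcne _ hr2 _)
  have hdetM : M.det ≠ 0 := by
    rw [hcong, Matrix.det_mul, Matrix.det_mul, Matrix.det_transpose, hdetG,
      Matrix.det_diagonal]
    simp only [one_mul, mul_one]
    rw [Finset.prod_ne_zero_iff]
    exact fun a _ => hwnne a
  refine ⟨hdetM, ?_⟩
  -- spectral theorem
  set V : Matrix {x // x ∈ S} {x // x ∈ S} ℝ := (hM.eigenvectorUnitary : Matrix {x // x ∈ S} {x // x ∈ S} ℝ) with hV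
  have hVmem : V ∈ Matrix.unitaryGroup {x // x ∈ S} ℝ := hM.eigenvectorUnitary.2
  have hVstar : star V * V = 1 := Matrix.mem_unitaryGroup_iff'.1 hVmem
  have hVstar2 : V * star V = 1 := Matrix.mem_unitaryGroup_iff.1 hVmem
  have hstarT : star V = Vᵀ := by ext i j; simp [Matrix.star_apply]
  have hdetV : IsUnit V.det := by
    apply IsUnit.of_mul_eq_one (star V).det
    rw [← Matrix.det_mul, hVstar2, Matrix.det_one]
  set μ : {x // x ∈ S} → ℝ := hM.eigenvalues with hμ
  have hspec : M = V * Matrix.diagonal μ * star V := by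
    have h0 := hM.spectral_theorem
    have h1 : (RCLike.ofReal ∘ hM.eigenvalues : {x // x ∈ S} → ℝ) = μ := funext fun i => rfl
    rw [h1] at h0
    exact h0
  have hdiagμ : Matrix.diagonal μ = star V * M * V := by
    rw [hspec, Matrix.mul_assoc, Matrix.mul_assoc, Matrix.mul_assoc, hVstar]
    rw [← Matrix.mul_assoc (star V) V, hVstar, Matrix.one_mul, Matrix.mul_one]
  -- congruence for the diagonal of eigenvalues
  set B : Matrix {x // x ∈ S} {x // x ∈ S} ℝ := G * V with hB
  have hdetB : IsUnit B.det := by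
    rw [hB, Matrix.det_mul, hdetG, one_mul]
    exact hdetV
  have hdiag : Matrix.diagonal μ = Bᵀ * Matrix.diagonal wn * B := by
    rw [hdiagμ, hcong, hB, Matrix.transpose_mul, hstarT]
    simp only [Matrix.mul_assoc]
  -- apply Sylvester
  have hnegcount : (Finset.univ.filter fun i => μ i < 0).card
      = (Finset.univ.filter fun a => wn a < 0).card :=
    sylv_mat μ wn B hdetB hdiag
  have hdiagneg : Matrix.diagonal (fun i => -μ i) = Bᵀ * Matrix.diagonal (fun a => -wn a) * B := by
    rw [← Matrix.diagonal_neg, ← Matrix.diagonal_neg, hdiag]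
    rw [Matrix.mul_neg, Matrix.neg_mul]
  have hposcount : (Finset.univ.filter fun i => -μ i < 0).card
      = (Finset.univ.filter fun a => -wn a < 0).card :=
    sylv_mat _ _ B hdetB hdiagneg
  -- transfer counts to Fin m × Fin m
  have htransfer : ∀ P : ℝ → Prop, (Finset.univ.filter fun a : {x // x ∈ S} => P (wn a)).card
      = (Finset.univ.filter fun t : Fin m × Fin m => P (w t)).card := by
    intro P
    apply Finset.card_equiv eqv.symm
    intro a
    simp only [Finset.mem_filter, Finset.mem_univ, true_and, hwn]
  -- counting over the product
  set last : Fin m := ⟨m - 1, by omega⟩ with hlast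
  have hlastiff : ∀ s : Fin m, s = last ↔ (s:ℕ) = m - 1 := by
    intro s
    rw [Fin.ext_iff]
  have hwneg : ∀ t : Fin m × Fin m, w t < 0 ↔
      ((t.1 = last ∧ ¬ t.2 = last) ∨ (¬ t.1 = last ∧ t.2 = last)) := by
    intro t
    rw [hlastiff, hlastiff]
    by_cases h1 : (t.1 : ℕ) = m - 1 <;> by_cases h2 : (t.2 : ℕ) = m - 1 <;>
      simp only [h1, h2, not_true, not_false_iff, and_true, and_false, true_and, false_and,
        or_false, false_or, iff_true, iff_false, hw]
    · exact not_lt.2 (le_of_lt (mul_pos (hcpos _ hr1 _ h1) (hcpos _ hr2 _ h2)))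
    · exact mul_neg_of_pos_of_neg (hcpos _ hr1 _ h1) (hcneg _ hr2 _ h2)
    · exact mul_neg_of_neg_of_pos (hcneg _ hr1 _ h1) (hcpos _ hr2 _ h2)
    · exact not_lt.2 (le_of_lt (mul_pos_of_neg_of_neg (hcneg _ hr1 _ h1) (hcneg _ hr2 _ h2)))
  have hcard_eq : (Finset.univ.filter fun s : Fin m => s = last).card = 1 := by
    rw [Finset.filter_eq', if_pos (Finset.mem_univ _), Finset.card_singleton]
  have hcard_ne : (Finset.univ.filter fun s : Fin m => ¬ s = last).card = m - 1 := by
    have := Finset.card_filter_add_card_filter_not (s := (Finset.univ : Finset (Fin m)))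
      (p := fun s : Fin m => s = last)
    simp only [Finset.card_univ, Fintype.card_fin, Finset.filter_congr_decidable] at this ⊢
    omega
  have hnegw : (Finset.univ.filter fun t : Fin m × Fin m => w t < 0).card = 2 * (m - 1) := by
    have hsplit : (Finset.univ.filter fun t : Fin m × Fin m => w t < 0)
        = ((Finset.univ.filter fun s : Fin m => s = last) ×ˢ
            (Finset.univ.filter fun s : Fin m => ¬ s = last))
          ∪ ((Finset.univ.filter fun s : Fin m => ¬ s = last) ×ˢ
            (Finset.univ.filter fun s : Fin m => s = last)) := by
      ext t
      simp only [Finset.mem_filter, Finset.mem_univ, true_and, Finset.mem_union,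
        Finset.mem_product, hwneg]
    rw [hsplit, Finset.card_union_of_disjoint, Finset.card_product, Finset.card_product,
      hcard_eq, hcard_ne]
    · ring
    · rw [Finset.disjoint_left]
      rintro ⟨t1, t2⟩ hmem1 hmem2
      simp only [Finset.mem_product, Finset.mem_filter, Finset.mem_univ, true_and] at hmem1 hmem2
      exact hmem2.1 hmem1.1
  have hwne : ∀ t : Fin m × Fin m, w t ≠ 0 :=
    fun t => mul_ne_zero (hcne _ hr1 _) (hcne _ hr2 _)
  have hposw : (Finset.univ.filter fun t : Fin m × Fin m => 0 < w t).card = (m - 1) ^ 2 + 1 := by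
    have hsum := Finset.card_filter_add_card_filter_not
      (s := (Finset.univ : Finset (Fin m × Fin m))) (p := fun t => 0 < w t)
    have hnotpos : (Finset.univ.filter fun t : Fin m × Fin m => ¬ 0 < w t)
        = (Finset.univ.filter fun t : Fin m × Fin m => w t < 0) := by
      apply Finset.filter_congr
      intro t _
      constructor
      · intro h; rcases lt_or_eq_of_le (not_lt.1 h) with h' | h'
        · exact h'
        · exact (hwne t h').elim
      · intro h; exact not_lt.2 (le_of_lt h)
    rw [hnotpos, hnegw] at hsum
    simp only [Finset.card_univ, Fintype.card_prod, Fintype.card_fin,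
      Finset.filter_congr_decidable] at hsum ⊢
    have harith : (m - 1) ^ 2 + 1 + 2 * (m - 1) = m * m := by
      obtain ⟨k, rfl⟩ : ∃ k, m = k + 1 := ⟨m - 1, by omega⟩
      simp only [Nat.add_sub_cancel]
      ring
    omega
  constructor
  · rw [hnegcount, htransfer (fun x => x < 0), hnegw]
  · have h1 : (Finset.univ.filter fun i => 0 < hM.eigenvalues i) =
        (Finset.univ.filter fun i => -μ i < 0) := by
      apply Finset.filter_congr
      intro i _
      rw [hμ, neg_lt_zero]
    rw [h1, hposcount]
    have h2 : (Finset.univ.filter fun a : {x // x ∈ S} => -wn a < 0) =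
        (Finset.univ.filter fun a : {x // x ∈ S} => 0 < wn a) := by
      apply Finset.filter_congr
      intro a _
      rw [neg_lt_zero]
    rw [h2, htransfer (fun x => 0 < x), hposw]
end

section
/- Let p_1, ..., p_m be distinct primes and S = {1} ∪ {p_1,...,p_m} ∪ {p_i p_j : 1 ≤ i < j ≤ m}. Then S is GCD closed, the LCM matrix [S] is invertible, and its inertia has i_-([S]) = m negative eigenvalues and i_+([S]) = 1 + C(m,2) positive eigenvalues. -/
open scoped Classical

open Matrix Finset

private noncomputable def projMap {n : Type*} [Fintype n] (P : n → Prop) :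
    (n → ℝ) →ₗ[ℝ] ({i // P i} → ℝ) where
  toFun x := fun i => x i.1
  map_add' x y := rfl
  map_smul' c x := rfl

private noncomputable def projMapC {n : Type*} [Fintype n] [DecidableEq n] (P : n → Prop)
    (C : Matrix n n ℝ) : (n → ℝ) →ₗ[ℝ] ({i // P i} → ℝ) where
  toFun x := fun i => (C *ᵥ x) i.1
  map_add' x y := by ext i; simp [Matrix.mulVec_add]
  map_smul' c x := by ext i; simp [Matrix.mulVec_smul]

lemma diag_neg' {n : Type*} [Fintype n] [DecidableEq n] (d : n → ℝ) :
    Matrix.diagonal (-d) = -Matrix.diagonal d := by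
  ext i j
  by_cases h : i = j <;> simp [Matrix.diagonal_apply, h]

lemma syl_le {n : Type*} [Fintype n] [DecidableEq n] (d₁ d₂ : n → ℝ) (C : Matrix n n ℝ)
    (h : Matrix.diagonal d₁ = Cᵀ * Matrix.diagonal d₂ * C) :
    (Finset.univ.filter fun i => 0 < d₁ i).card ≤ (Finset.univ.filter fun i => 0 < d₂ i).card := by
  classical
  by_contra hlt
  push_neg at hlt
  set N := Fintype.card n with hN
  set f := projMap (fun i => ¬ 0 < d₁ i)
  set g := projMapC (fun i => 0 < d₂ i) C
  have hranked : ∀ (m : Type) , True := fun _ => trivial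
  have hfr : Module.finrank ℝ (LinearMap.range f) + Module.finrank ℝ (LinearMap.ker f)
      = N := by
    rw [LinearMap.finrank_range_add_finrank_ker f]
    simp [hN]
  have hgr : Module.finrank ℝ (LinearMap.range g) + Module.finrank ℝ (LinearMap.ker g)
      = N := by
    rw [LinearMap.finrank_range_add_finrank_ker g]
    simp [hN]
  have hfle : Module.finrank ℝ (LinearMap.range f) ≤ N - (Finset.univ.filter fun i => 0 < d₁ i).card := by
    have := Submodule.finrank_le (LinearMap.range f)
    rw [Module.finrank_pi] at this
    have h2 : Fintype.card {i // ¬ 0 < d₁ i} = N - (Finset.univ.filter fun i => 0 < d₁ i).card := by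
      rw [Fintype.card_subtype_compl, Fintype.card_subtype]
    omega
  have hgle : Module.finrank ℝ (LinearMap.range g) ≤ (Finset.univ.filter fun i => 0 < d₂ i).card := by
    have := Submodule.finrank_le (LinearMap.range g)
    rw [Module.finrank_pi, Fintype.card_subtype] at this
    exact this
  have hcard1 : (Finset.univ.filter fun i => 0 < d₁ i).card ≤ N := by
    simpa [hN] using Finset.card_filter_le Finset.univ (fun i => 0 < d₁ i)
  have hsum : N < Module.finrank ℝ (LinearMap.ker f) + Module.finrank ℝ (LinearMap.ker g) := by
    omega
  have hsupinf := Submodule.finrank_sup_add_finrank_inf_eq (LinearMap.ker f) (LinearMap.ker g)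
  have hsuple : Module.finrank ℝ ↥(LinearMap.ker f ⊔ LinearMap.ker g) ≤ N := by
    have := Submodule.finrank_le (LinearMap.ker f ⊔ LinearMap.ker g)
    rwa [Module.finrank_pi] at this
  have hinf : 0 < Module.finrank ℝ ↥(LinearMap.ker f ⊓ LinearMap.ker g) := by omega
  have hne : LinearMap.ker f ⊓ LinearMap.ker g ≠ ⊥ := by
    intro hbot
    rw [hbot, finrank_bot] at hinf
    exact lt_irrefl 0 hinf
  obtain ⟨x, hx, hx0⟩ := Submodule.exists_mem_ne_zero_of_ne_bot hne
  have hxf : ∀ i, ¬ 0 < d₁ i → x i = 0 := by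
    intro i hi
    have : f x = 0 := hx.1
    exact congrFun this ⟨i, hi⟩
  have hxg : ∀ i, 0 < d₂ i → (C *ᵥ x) i = 0 := by
    intro i hi
    have : g x = 0 := hx.2
    exact congrFun this ⟨i, hi⟩
  have hs1 : x ⬝ᵥ (Matrix.diagonal d₁ *ᵥ x) = ∑ i, d₁ i * (x i * x i) := by
    simp [dotProduct, Matrix.mulVec_diagonal]
    exact Finset.sum_congr rfl fun i _ => by ring
  have hs1pos : 0 < x ⬝ᵥ (Matrix.diagonal d₁ *ᵥ x) := by
    rw [hs1]
    obtain ⟨i₀, hi₀⟩ : ∃ i, x i ≠ 0 := Function.ne_iff.mp hx0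
    have hd₀ : 0 < d₁ i₀ := by
      by_contra hc
      exact hi₀ (hxf i₀ hc)
    apply Finset.sum_pos'
    · intro i _
      by_cases hi : 0 < d₁ i
      · exact mul_nonneg hi.le (mul_self_nonneg _)
      · simp [hxf i hi]
    · exact ⟨i₀, Finset.mem_univ _, mul_pos hd₀ (mul_self_pos.mpr hi₀)⟩
  have hs2 : x ⬝ᵥ ((Cᵀ * Matrix.diagonal d₂ * C) *ᵥ x)
      = (C *ᵥ x) ⬝ᵥ (Matrix.diagonal d₂ *ᵥ (C *ᵥ x)) := by
    rw [Matrix.mul_assoc, ← Matrix.mulVec_mulVec, Matrix.dotProduct_mulVec,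
      Matrix.vecMul_transpose, ← Matrix.mulVec_mulVec]
  have hs2le : x ⬝ᵥ ((Cᵀ * Matrix.diagonal d₂ * C) *ᵥ x) ≤ 0 := by
    rw [hs2]
    have : (C *ᵥ x) ⬝ᵥ (Matrix.diagonal d₂ *ᵥ (C *ᵥ x)) = ∑ i, d₂ i * ((C *ᵥ x) i * (C *ᵥ x) i) := by
      simp [dotProduct, Matrix.mulVec_diagonal]
      exact Finset.sum_congr rfl fun i _ => by ring
    rw [this]
    apply Finset.sum_nonpos
    intro i _
    by_cases hi : 0 < d₂ i
    · simp [hxg i hi]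
    · exact mul_nonpos_of_nonpos_of_nonneg (le_of_not_gt hi) (mul_self_nonneg _)
  rw [h] at hs1pos
  linarith

lemma syl_eq {n : Type*} [Fintype n] [DecidableEq n] (d₁ d₂ : n → ℝ) (C : Matrix n n ℝ)
    (hC : IsUnit C.det)
    (h : Matrix.diagonal d₁ = Cᵀ * Matrix.diagonal d₂ * C) :
    ((Finset.univ.filter fun i => 0 < d₁ i).card = (Finset.univ.filter fun i => 0 < d₂ i).card)
    ∧ ((Finset.univ.filter fun i => d₁ i < 0).card = (Finset.univ.filter fun i => d₂ i < 0).card) := by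
  classical
  have hCC : C * C⁻¹ = 1 := Matrix.mul_nonsing_inv C hC
  have h2 : Matrix.diagonal d₂ = (C⁻¹)ᵀ * Matrix.diagonal d₁ * C⁻¹ := by
    rw [h]
    calc Matrix.diagonal d₂ = 1 * Matrix.diagonal d₂ * 1 := by simp
      _ = (C * C⁻¹)ᵀ * Matrix.diagonal d₂ * (C * C⁻¹) := by rw [hCC, Matrix.transpose_one]
      _ = (C⁻¹)ᵀ * (Cᵀ * Matrix.diagonal d₂ * C) * C⁻¹ := by
          rw [Matrix.transpose_mul]
          simp only [Matrix.mul_assoc]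
  have hneg : Matrix.diagonal (-d₁) = Cᵀ * Matrix.diagonal (-d₂) * C := by
    rw [diag_neg', diag_neg', h]
    simp only [Matrix.mul_neg, Matrix.neg_mul]
  have hneg2 : Matrix.diagonal (-d₂) = (C⁻¹)ᵀ * Matrix.diagonal (-d₁) * C⁻¹ := by
    rw [diag_neg', diag_neg', h2]
    simp only [Matrix.mul_neg, Matrix.neg_mul]
  constructor
  · exact le_antisymm (syl_le d₁ d₂ C h) (syl_le d₂ d₁ C⁻¹ h2)
  · have e1 := syl_le (-d₁) (-d₂) C hneg
    have e2 := syl_le (-d₂) (-d₁) C⁻¹ hneg2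
    simp only [Pi.neg_apply, neg_pos] at e1 e2
    exact le_antisymm e1 e2

abbrev PairsT (m : ℕ) := {ij : Fin m × Fin m // ij.1 < ij.2}
abbrev Kp (m : ℕ) := Unit ⊕ Fin m ⊕ PairsT m

def vK {m : ℕ} (p : Fin m → ℕ) : Kp m → ℕ
  | .inl _ => 1
  | .inr (.inl i) => p i
  | .inr (.inr q) => p q.1.1 * p q.1.2

section facts
variable {m : ℕ} {p : Fin m → ℕ} (hp : ∀ i, (p i).Prime) (hinj : Function.Injective p)

include hp hinj in
lemma pdvdp {i j : Fin m} : p i ∣ p j ↔ i = j := by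
  rw [Nat.prime_dvd_prime_iff_eq (hp i) (hp j), hinj.eq_iff]

include hp hinj in
lemma pdvdmul {i a b : Fin m} : p i ∣ p a * p b ↔ i = a ∨ i = b := by
  rw [(hp i).dvd_mul, pdvdp hp hinj, pdvdp hp hinj]

include hp hinj in
lemma muldvdp {a b i : Fin m} (hab : a ≠ b) : ¬ p a * p b ∣ p i := by
  intro h
  have ha : a = i := (pdvdp hp hinj).mp ((dvd_mul_right (p a) (p b)).trans h)
  have hb : b = i := (pdvdp hp hinj).mp ((dvd_mul_left (p b) (p a)).trans h)
  exact hab (ha.trans hb.symm)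

include hp in
lemma pnotdvdone {i : Fin m} : ¬ p i ∣ 1 := by
  rw [Nat.dvd_one]; exact (hp i).ne_one

include hp in
lemma mulnotdvdone {a b : Fin m} : ¬ p a * p b ∣ 1 := by
  rw [Nat.dvd_one]
  intro h
  exact (hp a).ne_one (Nat.eq_one_of_mul_eq_one_right h)

include hp hinj in
lemma muldvdmul {a b c d : Fin m} (hab : a < b) (hcd : c < d) :
    p a * p b ∣ p c * p d ↔ a = c ∧ b = d := by
  constructor
  · intro h
    have ha : a = c ∨ a = d := (pdvdmul hp hinj).mp ((dvd_mul_right (p a) (p b)).trans h)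
    have hb : b = c ∨ b = d := (pdvdmul hp hinj).mp ((dvd_mul_left (p b) (p a)).trans h)
    rcases ha with ha | ha <;> rcases hb with hb | hb
    · exact absurd (ha.trans hb.symm) hab.ne
    · exact ⟨ha, hb⟩
    · exfalso; omega
    · exact absurd (ha.trans hb.symm) hab.ne
  · rintro ⟨rfl, rfl⟩; rfl

include hp in
lemma vK_pos (k : Kp m) : 0 < vK p k := by
  cases k with
  | inl u => exact one_pos
  | inr k => cases k with
    | inl i => exact (hp i).pos
    | inr q => exact Nat.mul_pos (hp q.1.1).pos (hp q.1.2).pos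

include hp hinj in
lemma vK_dvd_one {k : Kp m} : vK p k ∣ 1 ↔ k = Sum.inl () := by
  cases k with
  | inl u => simp [vK]
  | inr k => cases k with
    | inl i => simp [vK, pnotdvdone hp]
    | inr q => simp [vK, mulnotdvdone hp]
end facts

set_option linter.unusedSectionVars false

def EK {m : ℕ} (p : Fin m → ℕ) : Matrix (Kp m) (Kp m) ℝ :=
  Matrix.of fun k k' => if vK p k ∣ vK p k' then (1 : ℝ) else 0

def EKinv {m : ℕ} (p : Fin m → ℕ) : Matrix (Kp m) (Kp m) ℝ :=
  Matrix.of fun k k' =>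
    match k, k' with
    | .inl _, .inl _ => 1
    | .inl _, .inr (.inl _) => -1
    | .inl _, .inr (.inr _) => 1
    | .inr (.inl i), .inr (.inl j) => if i = j then 1 else 0
    | .inr (.inl i), .inr (.inr q) => if i = q.1.1 ∨ i = q.1.2 then -1 else 0
    | .inr (.inr q), .inr (.inr q') => if q = q' then 1 else 0
    | _, _ => 0


@[simp] lemma EK_apply {m : ℕ} (p : Fin m → ℕ) (k k' : Kp m) :
    EK p k k' = if vK p k ∣ vK p k' then (1 : ℝ) else 0 := rfl

variable {m : ℕ} (p : Fin m → ℕ)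

@[simp] lemma EKinv_ll (u u' : Unit) : EKinv p (.inl u) (.inl u') = 1 := rfl
@[simp] lemma EKinv_lp (u : Unit) (i : Fin m) : EKinv p (.inl u) (.inr (.inl i)) = -1 := rfl
@[simp] lemma EKinv_lq (u : Unit) (q : PairsT m) : EKinv p (.inl u) (.inr (.inr q)) = 1 := rfl
@[simp] lemma EKinv_pl (i : Fin m) (u : Unit) : EKinv p (.inr (.inl i)) (.inl u) = 0 := rfl
@[simp] lemma EKinv_ql (q : PairsT m) (u : Unit) : EKinv p (.inr (.inr q)) (.inl u) = 0 := rfl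
@[simp] lemma EKinv_pp (i j : Fin m) :
    EKinv p (.inr (.inl i)) (.inr (.inl j)) = if i = j then 1 else 0 := rfl
@[simp] lemma EKinv_pq (i : Fin m) (q : PairsT m) :
    EKinv p (.inr (.inl i)) (.inr (.inr q)) = if i = q.1.1 ∨ i = q.1.2 then -1 else 0 := rfl
@[simp] lemma EKinv_qp (q : PairsT m) (i : Fin m) :
    EKinv p (.inr (.inr q)) (.inr (.inl i)) = 0 := rfl
@[simp] lemma EKinv_qq (q q' : PairsT m) :
    EKinv p (.inr (.inr q)) (.inr (.inr q')) = if q = q' then 1 else 0 := rfl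

lemma sum_pair_ind {m : ℕ} (a b : Fin m) (hab : a ≠ b) (f : Fin m → ℝ) :
    ∑ i, f i * (if i = a ∨ i = b then -1 else 0) = -(f a + f b) := by
  have key : ∀ i, f i * (if i = a ∨ i = b then -1 else 0)
      = (if i = a then -f i else 0) + (if i = b then -f i else 0) := by
    intro i
    by_cases h1 : i = a
    · subst h1
      simp [hab]
    · by_cases h2 : i = b
      · subst h2
        simp [h1]
      · simp [h1, h2]
  rw [Finset.sum_congr rfl (fun i _ => key i), Finset.sum_add_distrib,
    Finset.sum_ite_eq' Finset.univ a (fun i => -f i),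
    Finset.sum_ite_eq' Finset.univ b (fun i => -f i)]
  simp
  ring

section emul
variable {p} (hp : ∀ i, (p i).Prime) (hinj : Function.Injective p)

include hp hinj in
lemma EK_mul_EKinv : EK p * EKinv p = 1 := by
  have hne : ∀ q : PairsT m, q.1.1 ≠ q.1.2 := fun q => q.2.ne
  ext k k''
  rw [Matrix.mul_apply, Fintype.sum_sum_type, Fintype.sum_sum_type]
  cases k'' with
  | inl u =>
    cases u
    rcases k with u | i | q
    · simp [Matrix.one_apply, vK]
    · simp [Matrix.one_apply, vK, pnotdvdone hp]
    · simp [Matrix.one_apply, vK, mulnotdvdone hp]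
  | inr k'' =>
    rcases k'' with j | q
    · -- target a prime p j
      rcases k with u | i | q
      · simp [Matrix.one_apply, vK, mul_ite, Finset.sum_ite_eq']
      · simp [Matrix.one_apply, vK, mul_ite, Finset.sum_ite_eq', pnotdvdone hp,
          pdvdp hp hinj]
      · simp [Matrix.one_apply, vK, mul_ite, Finset.sum_ite_eq', mulnotdvdone hp,
          muldvdp hp hinj (hne q)]
    · -- target a product
      obtain ⟨⟨c, d⟩, hcd⟩ := q
      have hcd' : c ≠ d := hcd.ne
      have hmid : ∑ a₁ : Fin m, EK p k (Sum.inr (Sum.inl a₁)) *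
          EKinv p (Sum.inr (Sum.inl a₁)) (Sum.inr (Sum.inr ⟨(c, d), hcd⟩))
          = -(EK p k (Sum.inr (Sum.inl c)) + EK p k (Sum.inr (Sum.inl d))) := by
        simp only [EKinv_pq]
        exact sum_pair_ind c d hcd' _
      rw [hmid]
      rcases k with u | i | q'
      · simp [Matrix.one_apply, vK, mul_ite, Finset.sum_ite_eq']
      · simp only [EK_apply, EKinv_lq, EKinv_qq, vK, mul_ite, mul_one, mul_zero,
          Finset.sum_ite_eq', Finset.mem_univ, if_true, pnotdvdone hp,
          pdvdp hp hinj, pdvdmul hp hinj, if_false, Matrix.one_apply]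
        by_cases h1 : i = c <;> by_cases h2 : i = d <;>
          simp [h1, h2, hcd'] <;> omega
      · obtain ⟨⟨a, b⟩, hab⟩ := q'
        simp only [EK_apply, EKinv_lq, EKinv_qq, vK, mul_ite, mul_one, mul_zero,
          Finset.sum_ite_eq', Finset.mem_univ, if_true, mulnotdvdone hp,
          muldvdp hp hinj hab.ne, muldvdmul hp hinj hab hcd, if_false, Matrix.one_apply]
        by_cases h1 : a = c <;> by_cases h2 : b = d <;>
          simp [h1, h2, Subtype.ext_iff, Prod.ext_iff]
end emul

section gcdc
variable {m : ℕ} {p : Fin m → ℕ} (hp : ∀ i, (p i).Prime) (hinj : Function.Injective p)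

include hp hinj in
lemma pcop {i j : Fin m} (h : i ≠ j) : Nat.Coprime (p i) (p j) :=
  (Nat.coprime_primes (hp i) (hp j)).mpr (fun hc => h (hinj hc))

include hp hinj in
lemma gcd_closed (k k' : Kp m) : ∃ k₀ : Kp m, Nat.gcd (vK p k) (vK p k') = vK p k₀ := by
  rcases k with u | i | ⟨⟨a, b⟩, hab⟩
  · exact ⟨Sum.inl (), by simp [vK]⟩
  · rcases k' with u | j | ⟨⟨c, d⟩, hcd⟩
    · exact ⟨Sum.inl (), by simp [vK]⟩
    · by_cases h : i = j
      · subst h; exact ⟨Sum.inr (Sum.inl i), by simp [vK]⟩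
      · exact ⟨Sum.inl (), by simpa [vK] using (pcop hp hinj h)⟩
    · by_cases h1 : i = c
      · subst h1
        exact ⟨Sum.inr (Sum.inl i), by simp [vK, Nat.gcd_eq_left (dvd_mul_right _ _)]⟩
      · by_cases h2 : i = d
        · subst h2
          exact ⟨Sum.inr (Sum.inl i), by simp [vK, Nat.gcd_eq_left (dvd_mul_left _ _)]⟩
        · exact ⟨Sum.inl (), by
            simpa [vK] using ((pcop hp hinj h1).mul_right (pcop hp hinj h2))⟩
  · rcases k' with u | j | ⟨⟨c, d⟩, hcd⟩
    · exact ⟨Sum.inl (), by simp [vK]⟩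
    · by_cases h1 : j = a
      · subst h1
        refine ⟨Sum.inr (Sum.inl j), ?_⟩
        simp [vK, Nat.gcd_comm, Nat.gcd_eq_left (dvd_mul_right _ _)]
      · by_cases h2 : j = b
        · subst h2
          refine ⟨Sum.inr (Sum.inl j), ?_⟩
          simp [vK, Nat.gcd_comm, Nat.gcd_eq_left (dvd_mul_left _ _)]
        · refine ⟨Sum.inl (), ?_⟩
          have := ((pcop hp hinj h1).mul_right (pcop hp hinj h2)).symm
          simpa [vK, Nat.gcd_comm] using this.symm.gcd_eq_one.symm ▸ (by
            simpa [vK] using (((pcop hp hinj h1).mul_right (pcop hp hinj h2)).symm :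
              Nat.Coprime (p a * p b) (p j)))
    · -- pair vs pair
      have hab2 : a < b := hab
      have hcd2 : c < d := hcd
      show ∃ k₀, Nat.gcd (p a * p b) (p c * p d) = vK p k₀
      by_cases h1 : a = c
      · subst h1
        by_cases h2 : b = d
        · subst h2
          exact ⟨Sum.inr (Sum.inr ⟨(a, b), hab⟩), (Nat.gcd_self _).symm ▸ rfl⟩
        · refine ⟨Sum.inr (Sum.inl a), ?_⟩
          show Nat.gcd (p a * p b) (p a * p d) = p a
          rw [Nat.gcd_mul_left, (pcop hp hinj h2).gcd_eq_one, mul_one]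
      · by_cases h2 : a = d
        · subst h2
          have hbc : b ≠ c := by
            intro h; rw [h] at hab2; exact absurd (hcd2.trans hab2) (lt_irrefl _)
          refine ⟨Sum.inr (Sum.inl a), ?_⟩
          show Nat.gcd (p a * p b) (p c * p a) = p a
          rw [mul_comm (p c) (p a), Nat.gcd_mul_left, (pcop hp hinj hbc).gcd_eq_one, mul_one]
        · by_cases h3 : b = c
          · subst h3
            have had : a ≠ d := by
              intro h; rw [h] at hab2; exact absurd (hab2.trans hcd2) (lt_irrefl _)
            refine ⟨Sum.inr (Sum.inl b), ?_⟩
            show Nat.gcd (p a * p b) (p b * p d) = p b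
            rw [mul_comm (p a) (p b), Nat.gcd_mul_left, (pcop hp hinj had).gcd_eq_one, mul_one]
          · by_cases h4 : b = d
            · subst h4
              refine ⟨Sum.inr (Sum.inl b), ?_⟩
              show Nat.gcd (p a * p b) (p c * p b) = p b
              rw [mul_comm (p a) (p b), mul_comm (p c) (p b), Nat.gcd_mul_left,
                (pcop hp hinj h1).gcd_eq_one, mul_one]
            · refine ⟨Sum.inl (), ?_⟩
              have cop : Nat.Coprime (p a * p b) (p c * p d) :=
                Nat.Coprime.mul ((pcop hp hinj h1).mul_right (pcop hp hinj h2))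
                  ((pcop hp hinj h3).mul_right (pcop hp hinj h4))
              simpa [vK] using cop
end gcdc

lemma sum_pair_ind' {m : ℕ} (a b : Fin m) (hab : a ≠ b) (f : Fin m → ℝ) :
    ∑ i, (if i = a ∨ i = b then f i else 0) = f a + f b := by
  have key : ∀ i, (if i = a ∨ i = b then f i else 0)
      = (if i = a then f i else 0) + (if i = b then f i else 0) := by
    intro i
    by_cases h1 : i = a
    · subst h1; simp [hab]
    · by_cases h2 : i = b
      · subst h2; simp [h1]
      · simp [h1, h2]
  rw [Finset.sum_congr rfl (fun i _ => key i), Finset.sum_add_distrib,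
    Finset.sum_ite_eq' Finset.univ a f, Finset.sum_ite_eq' Finset.univ b f]
  simp

noncomputable def chb {m : ℕ} (p : Fin m → ℕ) : Kp m → ℝ
  | .inl _ => 1
  | .inr (.inl i) => (p i : ℝ)⁻¹ - 1
  | .inr (.inr q) => (1 - (p q.1.1 : ℝ)⁻¹) * (1 - (p q.1.2 : ℝ)⁻¹)

section moebius
variable {m : ℕ} {p : Fin m → ℕ} (hp : ∀ i, (p i).Prime) (hinj : Function.Injective p)

include hp in
lemma pR_ne {i : Fin m} : (p i : ℝ) ≠ 0 := Nat.cast_ne_zero.mpr (hp i).pos.ne'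

include hp hinj in
lemma moebius_sum (k₀ : Kp m) :
    (∑ d, if vK p d ∣ vK p k₀ then chb p d else 0) = (vK p k₀ : ℝ)⁻¹ := by
  rw [Fintype.sum_sum_type, Fintype.sum_sum_type]
  rcases k₀ with u | j | ⟨⟨c, d⟩, hcd⟩
  · simp [vK, chb, pnotdvdone hp, mulnotdvdone hp]
  · have hq : ∀ q : PairsT m, ¬ vK p (Sum.inr (Sum.inr q)) ∣ vK p (Sum.inr (Sum.inl j)) :=
      fun q => muldvdp hp hinj q.2.ne
    simp only [hq, if_false, Finset.sum_const_zero, add_zero]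
    have hii : ∀ i : Fin m, vK p (Sum.inr (Sum.inl i)) ∣ vK p (Sum.inr (Sum.inl j)) ↔ i = j :=
      fun i => pdvdp hp hinj
    simp only [show ∀ i, (if vK p (Sum.inr (Sum.inl i)) ∣ vK p (Sum.inr (Sum.inl j))
        then chb p (Sum.inr (Sum.inl i)) else 0)
        = (if i = j then chb p (Sum.inr (Sum.inl i)) else 0) from fun i => by simp only [hii i]]
    rw [Finset.sum_ite_eq' Finset.univ j]
    simp [vK, chb]
  · have hcd2 : c ≠ d := hcd.ne
    have h1 : ∀ i : Fin m, (if vK p (Sum.inr (Sum.inl i)) ∣ vK p (Sum.inr (Sum.inr ⟨(c, d), hcd⟩))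
        then chb p (Sum.inr (Sum.inl i)) else 0)
        = (if i = c ∨ i = d then chb p (Sum.inr (Sum.inl i)) else 0) := by
      intro i
      have : vK p (Sum.inr (Sum.inl i)) ∣ vK p (Sum.inr (Sum.inr ⟨(c, d), hcd⟩)) ↔ i = c ∨ i = d :=
        pdvdmul hp hinj
      simp only [this]
    have h2 : ∀ q : PairsT m, (if vK p (Sum.inr (Sum.inr q)) ∣ vK p (Sum.inr (Sum.inr ⟨(c, d), hcd⟩))
        then chb p (Sum.inr (Sum.inr q)) else 0)
        = (if q = ⟨(c, d), hcd⟩ then chb p (Sum.inr (Sum.inr q)) else 0) := by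
      rintro ⟨⟨a, b⟩, hab⟩
      have : vK p (Sum.inr (Sum.inr ⟨(a, b), hab⟩)) ∣ vK p (Sum.inr (Sum.inr ⟨(c, d), hcd⟩))
          ↔ a = c ∧ b = d := muldvdmul hp hinj hab hcd
      simp only [this]
      congr 1
      simp [Subtype.ext_iff, Prod.ext_iff]
    simp only [Finset.sum_congr rfl (fun i _ => h1 i), Finset.sum_congr rfl (fun q _ => h2 q)]
    rw [sum_pair_ind' c d hcd2, Finset.sum_ite_eq' Finset.univ (⟨(c, d), hcd⟩ : PairsT m)]
    simp only [Finset.mem_univ, if_true, vK, chb, one_dvd, Finset.sum_const, Finset.card_univ,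
      Fintype.card_unit, one_smul]
    have hc : (p c : ℝ) ≠ 0 := pR_ne hp
    have hd : (p d : ℝ) ≠ 0 := pR_ne hp
    have h1r : (1 : ℝ) ∣ 1 := dvd_refl 1
    push_cast
    field_simp
    ring

end moebius

noncomputable def BK {m : ℕ} (p : Fin m → ℕ) : Matrix (Kp m) (Kp m) ℝ :=
  Matrix.of fun d k => (if vK p d ∣ vK p k then (1 : ℝ) else 0) * (vK p k : ℝ)

section keyid
variable {m : ℕ} {p : Fin m → ℕ} (hp : ∀ i, (p i).Prime) (hinj : Function.Injective p)

lemma BK_eq : BK p = EK p * Matrix.diagonal (fun k => (vK p k : ℝ)) := by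
  ext d k
  simp [BK, Matrix.mul_diagonal]

include hp hinj in
lemma BK_det : IsUnit (BK p).det := by
  rw [BK_eq, Matrix.det_mul]
  haveI : Invertible (EK p) := invertibleOfRightInverse _ _ (EK_mul_EKinv hp hinj)
  refine (Matrix.isUnit_det_of_invertible (EK p)).mul ?_
  rw [Matrix.det_diagonal]
  rw [isUnit_iff_ne_zero]
  exact Finset.prod_ne_zero_iff.mpr fun k _ => Nat.cast_ne_zero.mpr (vK_pos hp k).ne'

include hp hinj in
lemma key_id (k k' : Kp m) :
    (Nat.lcm (vK p k) (vK p k') : ℝ) = ∑ d, BK p d k * (chb p d * BK p d k') := by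
  have h1 : ∀ d, BK p d k * (chb p d * BK p d k') =
      (if vK p d ∣ Nat.gcd (vK p k) (vK p k') then chb p d else 0) * ((vK p k : ℝ) * vK p k') := by
    intro d
    have hiff : vK p d ∣ Nat.gcd (vK p k) (vK p k') ↔ (vK p d ∣ vK p k ∧ vK p d ∣ vK p k') :=
      Nat.dvd_gcd_iff
    by_cases hd1 : vK p d ∣ vK p k <;> by_cases hd2 : vK p d ∣ vK p k' <;>
      simp [BK, hd1, hd2, hiff] <;> ring
  rw [Finset.sum_congr rfl (fun d _ => h1 d), ← Finset.sum_mul]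
  obtain ⟨k₀, hk₀⟩ := gcd_closed hp hinj k k'
  rw [hk₀, moebius_sum hp hinj k₀]
  have hg : (vK p k₀ : ℝ) ≠ 0 := Nat.cast_ne_zero.mpr (vK_pos hp k₀).ne'
  have hgl : (Nat.gcd (vK p k) (vK p k') : ℝ) * (Nat.lcm (vK p k) (vK p k') : ℝ)
      = (vK p k : ℝ) * vK p k' := by
    rw [← Nat.cast_mul, Nat.gcd_mul_lcm, Nat.cast_mul]
  rw [hk₀] at hgl
  field_simp
  linarith [hgl]
end keyid

lemma card_pairs (m : ℕ) : Fintype.card (PairsT m) = m.choose 2 := by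
  have e : PairsT m ≃ Σ j : Fin m, {i : Fin m // i < j} :=
    { toFun := fun q => ⟨q.1.2, ⟨q.1.1, q.2⟩⟩
      invFun := fun x => ⟨(x.2.1, x.1), x.2.2⟩
      left_inv := fun q => rfl
      right_inv := fun x => rfl }
  rw [Fintype.card_congr e, Fintype.card_sigma]
  have hcard : ∀ j : Fin m, Fintype.card {i : Fin m // i < j} = (j : ℕ) := by
    intro j
    calc Fintype.card {i : Fin m // i < j}
        = Fintype.card (Set.Iio j) := Fintype.card_congr (Equiv.subtypeEquivRight fun i => Iff.rfl)
      _ = (j : ℕ) := by simp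
  rw [Finset.sum_congr rfl (fun j _ => hcard j), Fin.sum_univ_eq_sum_range (fun j => j) m,
    Finset.sum_range_id, Nat.choose_two_right]

lemma congr_entry {n : Type*} [Fintype n] [DecidableEq n] (X : Matrix n n ℝ) (w : n → ℝ)
    (a b : n) : (Xᵀ * Matrix.diagonal w * X) a b = ∑ d, X d a * (w d * X d b) := by
  rw [Matrix.mul_assoc, Matrix.mul_apply]
  exact Finset.sum_congr rfl fun d _ => by rw [Matrix.transpose_apply, Matrix.diagonal_mul]

section vinj
variable {m : ℕ} {p : Fin m → ℕ} (hp : ∀ i, (p i).Prime) (hinj : Function.Injective p)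

include hp hinj in
lemma vK_inj : Function.Injective (vK p) := by
  intro k k' h
  rcases k with u | i | ⟨⟨a, b⟩, hab⟩ <;> rcases k' with u' | j | ⟨⟨c, d⟩, hcd⟩
  · rfl
  · exact absurd h.symm (by simpa [vK] using (hp j).one_lt.ne')
  · exfalso
    simp only [vK] at h
    exact (hp c).ne_one (Nat.eq_one_of_mul_eq_one_right h.symm)
  · exact absurd h (by simpa [vK] using (hp i).one_lt.ne')
  · simp only [vK] at h
    rw [hinj h]
  · exfalso
    simp only [vK] at h
    have h1 : p c ∣ p i := h ▸ dvd_mul_right (p c) (p d)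
    have h2 : p d ∣ p i := h ▸ dvd_mul_left (p d) (p c)
    exact hcd.ne ((pdvdp hp hinj).mp h1 |>.trans ((pdvdp hp hinj).mp h2).symm)
  · exfalso
    simp only [vK] at h
    exact (hp a).ne_one (Nat.eq_one_of_mul_eq_one_right h)
  · exfalso
    simp only [vK] at h
    have h1 : p a ∣ p j := h.symm ▸ dvd_mul_right (p a) (p b)
    have h2 : p b ∣ p j := h.symm ▸ dvd_mul_left (p b) (p a)
    exact hab.ne ((pdvdp hp hinj).mp h1 |>.trans ((pdvdp hp hinj).mp h2).symm)
  · simp only [vK] at h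
    obtain ⟨h1, h2⟩ := (muldvdmul hp hinj hab hcd).mp (h ▸ dvd_refl _)
    subst h1; subst h2; rfl
end vinj

section signs
variable {m : ℕ} {p : Fin m → ℕ} (hp : ∀ i, (p i).Prime)

include hp in
lemma chb_prime_neg (i : Fin m) : chb p (Sum.inr (Sum.inl i)) < 0 := by
  have h1 : (1 : ℝ) < p i := by exact_mod_cast (hp i).one_lt
  have h2 : (p i : ℝ)⁻¹ < 1 := inv_lt_one_of_one_lt₀ h1
  simp only [chb]
  linarith

include hp in
lemma chb_pair_pos (q : PairsT m) : 0 < chb p (Sum.inr (Sum.inr q)) := by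
  have h1 : (1 : ℝ) < p q.1.1 := by exact_mod_cast (hp q.1.1).one_lt
  have h2 : (1 : ℝ) < p q.1.2 := by exact_mod_cast (hp q.1.2).one_lt
  have h3 : (p q.1.1 : ℝ)⁻¹ < 1 := inv_lt_one_of_one_lt₀ h1
  have h4 : (p q.1.2 : ℝ)⁻¹ < 1 := inv_lt_one_of_one_lt₀ h2
  simp only [chb]
  nlinarith

end signs

open scoped Classical

theorem stmt19 (m : ℕ) (p : Fin m → ℕ)
    (hp : ∀ i, (p i).Prime) (hinj : Function.Injective p)
    (S : Finset ℕ)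
    (hS : S = insert 1 ((Finset.univ.image p) ∪
      ((Finset.univ ×ˢ Finset.univ).filter (fun ij : Fin m × Fin m => ij.1 < ij.2)).image
        fun ij => p ij.1 * p ij.2))
    (M : Matrix {x // x ∈ S} {x // x ∈ S} ℝ)
    (hMdef : M = Matrix.of fun a b => (Nat.lcm a.1 b.1 : ℝ))
    (hM : M.IsHermitian) :
    (∀ a ∈ S, ∀ b ∈ S, Nat.gcd a b ∈ S) ∧
    M.det ≠ 0 ∧
    (Finset.univ.filter fun i => hM.eigenvalues i < 0).card = m ∧
    (Finset.univ.filter fun i => 0 < hM.eigenvalues i).card = 1 + m.choose 2 := by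
  classical
  have hmem : ∀ k : Kp m, vK p k ∈ S := by
    intro k
    rw [hS]
    rcases k with u | i | ⟨⟨a, b⟩, hab⟩
    · exact Finset.mem_insert_self 1 _
    · refine Finset.mem_insert_of_mem (Finset.mem_union_left _ ?_)
      exact Finset.mem_image.mpr ⟨i, Finset.mem_univ i, rfl⟩
    · refine Finset.mem_insert_of_mem (Finset.mem_union_right _ ?_)
      refine Finset.mem_image.mpr ⟨(a, b), ?_, rfl⟩
      exact Finset.mem_filter.mpr ⟨Finset.mem_product.mpr ⟨Finset.mem_univ _, Finset.mem_univ _⟩, hab⟩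
  have hsurj : ∀ s ∈ S, ∃ k : Kp m, vK p k = s := by
    intro s hs
    rw [hS] at hs
    rcases Finset.mem_insert.mp hs with h | h
    · exact ⟨Sum.inl (), h.symm⟩
    rcases Finset.mem_union.mp h with h | h
    · obtain ⟨i, _, hi⟩ := Finset.mem_image.mp h
      exact ⟨Sum.inr (Sum.inl i), hi⟩
    · obtain ⟨ij, hij, hval⟩ := Finset.mem_image.mp h
      exact ⟨Sum.inr (Sum.inr ⟨ij, (Finset.mem_filter.mp hij).2⟩), hval⟩
  have hgcdS : ∀ a ∈ S, ∀ b ∈ S, Nat.gcd a b ∈ S := by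
    intro a ha b hb
    obtain ⟨k, hk⟩ := hsurj a ha
    obtain ⟨k', hk'⟩ := hsurj b hb
    obtain ⟨k₀, h0⟩ := gcd_closed hp hinj k k'
    rw [← hk, ← hk', h0]
    exact hmem k₀
  -- the equivalence
  let f : Kp m → {x // x ∈ S} := fun k => ⟨vK p k, hmem k⟩
  have hf : Function.Bijective f := by
    constructor
    · intro k k' h
      exact vK_inj hp hinj (congrArg Subtype.val h)
    · intro s
      obtain ⟨k, hk⟩ := hsurj s.1 s.2
      exact ⟨k, Subtype.ext hk⟩
  let e : Kp m ≃ {x // x ∈ S} := Equiv.ofBijective f hf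
  have hv : ∀ a : {x // x ∈ S}, vK p (e.symm a) = a.1 := by
    intro a
    have : e (e.symm a) = a := e.apply_symm_apply a
    exact congrArg Subtype.val this
  -- factorization of M
  have hMfact : M = ((BK p).submatrix e.symm e.symm)ᵀ * Matrix.diagonal (chb p ∘ e.symm)
      * ((BK p).submatrix e.symm e.symm) := by
    ext a b
    rw [congr_entry, hMdef]
    have hsum : ∑ d, (BK p).submatrix e.symm e.symm d a * ((chb p ∘ ⇑e.symm) d
        * (BK p).submatrix e.symm e.symm d b)
        = ∑ k : Kp m, BK p k (e.symm a) * (chb p k * BK p k (e.symm b)) := by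
      exact Equiv.sum_comp e.symm fun k => BK p k (e.symm a) * (chb p k * BK p k (e.symm b))
    rw [Matrix.of_apply, hsum, ← key_id hp hinj (e.symm a) (e.symm b), hv, hv]
  -- spectral theorem
  set U := (hM.eigenvectorUnitary : Matrix {x // x ∈ S} {x // x ∈ S} ℝ) with hUdef
  have hU : U * star U = 1 := Matrix.mem_unitaryGroup_iff.mp hM.eigenvectorUnitary.2
  have hspec : star U * M * U = Matrix.diagonal hM.eigenvalues := by
    have h := hM.conjStarAlgAut_star_eigenvectorUnitary
    simp only [Unitary.conjStarAlgAut_apply, Unitary.coe_star, star_star] at h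
    rw [RCLike.ofReal_real_eq_id] at h
    exact h
  have hstarU : star U = Uᵀ := by
    ext i j
    simp [Matrix.star_eq_conjTranspose, Matrix.conjTranspose_apply]
  set Bι := (BK p).submatrix ⇑e.symm ⇑e.symm with hBι
  set C := Bι * U with hC
  have hdetC : IsUnit C.det := by
    rw [hC, Matrix.det_mul]
    have h1 : IsUnit Bι.det := by
      rw [hBι, Matrix.det_submatrix_equiv_self]
      exact BK_det hp hinj
    have h2 : IsUnit U.det :=
      IsUnit.of_mul_eq_one _ (by rw [← Matrix.det_mul, hU, Matrix.det_one])
    exact h1.mul h2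
  have hcong : Matrix.diagonal hM.eigenvalues
      = Cᵀ * Matrix.diagonal (chb p ∘ ⇑e.symm) * C := by
    rw [← hspec, hC, Matrix.transpose_mul, ← hstarU]
    nth_rewrite 1 [hMfact]
    simp only [Matrix.mul_assoc]
  have hsyl := syl_eq hM.eigenvalues (chb p ∘ ⇑e.symm) C hdetC hcong
  -- transfer counts from ι to κ
  have hposι : (Finset.univ.filter fun i => 0 < (chb p ∘ ⇑e.symm) i).card
      = (Finset.univ.filter fun k : Kp m => 0 < chb p k).card := by
    rw [← Fintype.card_subtype, ← Fintype.card_subtype]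
    exact Fintype.card_congr (e.symm.subtypeEquiv fun i => Iff.rfl)
  have hnegι : (Finset.univ.filter fun i => (chb p ∘ ⇑e.symm) i < 0).card
      = (Finset.univ.filter fun k : Kp m => chb p k < 0).card := by
    rw [← Fintype.card_subtype, ← Fintype.card_subtype]
    exact Fintype.card_congr (e.symm.subtypeEquiv fun i => Iff.rfl)
  -- counts on κ
  have hposκ : (Finset.univ.filter fun k : Kp m => 0 < chb p k).card
      = 1 + m.choose 2 := by
    rw [Finset.card_filter, Fintype.sum_sum_type, Fintype.sum_sum_type]
    have h1 : ∀ u : Unit, (if 0 < chb p (Sum.inl u) then (1:ℕ) else 0) = 1 := by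
      intro u; simp [chb]
    have h2 : ∀ i : Fin m, (if 0 < chb p (Sum.inr (Sum.inl i)) then (1:ℕ) else 0) = 0 := by
      intro i; simp [not_lt.mpr (chb_prime_neg hp i).le]
    have h3 : ∀ q : PairsT m, (if 0 < chb p (Sum.inr (Sum.inr q)) then (1:ℕ) else 0) = 1 := by
      intro q; simp [chb_pair_pos hp q]
    simp only [h1, h2, h3, Finset.sum_const, Finset.sum_const_zero, smul_eq_mul, mul_one]
    simp [card_pairs m]
  have hnegκ : (Finset.univ.filter fun k : Kp m => chb p k < 0).card = m := by
    rw [Finset.card_filter, Fintype.sum_sum_type, Fintype.sum_sum_type]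
    have h1 : ∀ u : Unit, (if chb p (Sum.inl u) < 0 then (1:ℕ) else 0) = 0 := by
      intro u; simp [chb]; exact if_neg (by norm_num)
    have h2 : ∀ i : Fin m, (if chb p (Sum.inr (Sum.inl i)) < 0 then (1:ℕ) else 0) = 1 := by
      intro i; simp [chb_prime_neg hp i]
    have h3 : ∀ q : PairsT m, (if chb p (Sum.inr (Sum.inr q)) < 0 then (1:ℕ) else 0) = 0 := by
      intro q; simp [not_lt.mpr (chb_pair_pos hp q).le]
    simp only [h1, h2, h3, Finset.sum_const, Finset.sum_const_zero, smul_eq_mul, mul_one]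
    simp
  have hneg : (Finset.univ.filter fun i => hM.eigenvalues i < 0).card = m := by
    rw [hsyl.2, hnegι, hnegκ]
  have hpos : (Finset.univ.filter fun i => 0 < hM.eigenvalues i).card = 1 + m.choose 2 := by
    rw [hsyl.1, hposι, hposκ]
  -- determinant
  have hcardι : Fintype.card {x // x ∈ S} = 1 + (m + m.choose 2) := by
    rw [← Fintype.card_congr e]
    simp [card_pairs m]
  have hall : ∀ i, hM.eigenvalues i ≠ 0 := by
    intro i
    have hdisj : Disjoint (Finset.univ.filter fun i => hM.eigenvalues i < 0)
        (Finset.univ.filter fun i => 0 < hM.eigenvalues i) := by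
      rw [Finset.disjoint_left]
      intro x hx1 hx2
      have h1 := (Finset.mem_filter.mp hx1).2
      have h2 := (Finset.mem_filter.mp hx2).2
      linarith
    have hcup : ((Finset.univ.filter fun i => hM.eigenvalues i < 0)
        ∪ (Finset.univ.filter fun i => 0 < hM.eigenvalues i)) = Finset.univ := by
      apply Finset.eq_univ_of_card
      rw [Finset.card_union_of_disjoint hdisj, hneg, hpos, hcardι]
      omega
    have : i ∈ (Finset.univ.filter fun i => hM.eigenvalues i < 0)
        ∪ (Finset.univ.filter fun i => 0 < hM.eigenvalues i) := by
      rw [hcup]; exact Finset.mem_univ i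
    rcases Finset.mem_union.mp this with h | h
    · exact (Finset.mem_filter.mp h).2.ne
    · exact (Finset.mem_filter.mp h).2.ne'
  have hdet : M.det ≠ 0 := by
    rw [hM.det_eq_prod_eigenvalues]
    exact Finset.prod_ne_zero_iff.mpr fun i _ => by
      simpa using hall i
  exact ⟨hgcdS, hdet, hneg, hpos⟩
end
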